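/- arXiv:2407.18833 — 6 statements merged into one kernel-verified Lean document; each statement's English description precedes it below -/
import Mathlib

section
/- (Proposition 1) The observer candidate Σ̂ is an acceptor for the system Σ if and only if its matrices satisfy the acceptor equations: (i) (I_n − Dy C) E + (A_UIO Dy − By) F = 0; (ii) Dy F = 0; (iii) A_UIO = (I_n − Dy C) A + (A_UIO Dy − By) C; (iv) Bu = (I_n − Dy C) B − By D; (v) Du = −Dy D. -/
open Matrix Filter

noncomputable section

/-- A real square matrix is Schur stable if all its complex eigenvalues
have modulus strictly less than 1. -/
def SchurStable {n : ℕ} (M : Matrix (Fin n) (Fin n) ℝ) : Prop :=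
  ∀ μ ∈ spectrum ℂ (M.map (algebraMap ℝ ℂ)), ‖μ‖ < 1

/-- `(x, u, y, d)` is a solution of the system `Σ`:
`x(t+1) = A x(t) + B u(t) + E d(t)`, `y(t) = C x(t) + D u(t) + F d(t)`. -/
def SigmaSol {n m p r : ℕ}
    (A : Matrix (Fin n) (Fin n) ℝ) (B : Matrix (Fin n) (Fin m) ℝ)
    (Cm : Matrix (Fin p) (Fin n) ℝ) (Dm : Matrix (Fin p) (Fin m) ℝ)
    (E : Matrix (Fin n) (Fin r) ℝ) (F : Matrix (Fin p) (Fin r) ℝ)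
    (x : ℕ → Fin n → ℝ) (u : ℕ → Fin m → ℝ) (y : ℕ → Fin p → ℝ)
    (d : ℕ → Fin r → ℝ) : Prop :=
  ∀ t : ℕ,
    x (t + 1) = A.mulVec (x t) + B.mulVec (u t) + E.mulVec (d t) ∧
    y t = Cm.mulVec (x t) + Dm.mulVec (u t) + F.mulVec (d t)

/-- `(x̂, u, y, z)` is a solution of the observer candidate `Σ̂`:
`z(t+1) = A_UIO z(t) + Bu u(t) + By y(t)`, `x̂(t) = z(t) + Du u(t) + Dy y(t)`. -/
def ObsSol {n m p : ℕ}
    (Auio : Matrix (Fin n) (Fin n) ℝ) (Bu : Matrix (Fin n) (Fin m) ℝ)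
    (By : Matrix (Fin n) (Fin p) ℝ) (Du : Matrix (Fin n) (Fin m) ℝ)
    (Dy : Matrix (Fin n) (Fin p) ℝ)
    (xh : ℕ → Fin n → ℝ) (u : ℕ → Fin m → ℝ) (y : ℕ → Fin p → ℝ)
    (z : ℕ → Fin n → ℝ) : Prop :=
  ∀ t : ℕ,
    z (t + 1) = Auio.mulVec (z t) + Bu.mulVec (u t) + By.mulVec (y t) ∧
    xh t = z t + Du.mulVec (u t) + Dy.mulVec (y t)

/-- `Σ̂` is an acceptor for `Σ`: every solution of `Σ` can be tracked exactly. -/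
def IsAcceptor {n m p r : ℕ}
    (A : Matrix (Fin n) (Fin n) ℝ) (B : Matrix (Fin n) (Fin m) ℝ)
    (Cm : Matrix (Fin p) (Fin n) ℝ) (Dm : Matrix (Fin p) (Fin m) ℝ)
    (E : Matrix (Fin n) (Fin r) ℝ) (F : Matrix (Fin p) (Fin r) ℝ)
    (Auio : Matrix (Fin n) (Fin n) ℝ) (Bu : Matrix (Fin n) (Fin m) ℝ)
    (By : Matrix (Fin n) (Fin p) ℝ) (Du : Matrix (Fin n) (Fin m) ℝ)
    (Dy : Matrix (Fin n) (Fin p) ℝ) : Prop :=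
  ∀ (x : ℕ → Fin n → ℝ) (u : ℕ → Fin m → ℝ) (y : ℕ → Fin p → ℝ)
    (d : ℕ → Fin r → ℝ), SigmaSol A B Cm Dm E F x u y d →
      ∃ z : ℕ → Fin n → ℝ, ObsSol Auio Bu By Du Dy x u y z

/-- `Σ̂` is an unknown-input observer (UIO) for `Σ`: it is an acceptor and
the estimation error tends to zero for all matching solutions. -/
def IsUIO {n m p r : ℕ}
    (A : Matrix (Fin n) (Fin n) ℝ) (B : Matrix (Fin n) (Fin m) ℝ)
    (Cm : Matrix (Fin p) (Fin n) ℝ) (Dm : Matrix (Fin p) (Fin m) ℝ)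
    (E : Matrix (Fin n) (Fin r) ℝ) (F : Matrix (Fin p) (Fin r) ℝ)
    (Auio : Matrix (Fin n) (Fin n) ℝ) (Bu : Matrix (Fin n) (Fin m) ℝ)
    (By : Matrix (Fin n) (Fin p) ℝ) (Du : Matrix (Fin n) (Fin m) ℝ)
    (Dy : Matrix (Fin n) (Fin p) ℝ) : Prop :=
  IsAcceptor A B Cm Dm E F Auio Bu By Du Dy ∧
  ∀ (x : ℕ → Fin n → ℝ) (u : ℕ → Fin m → ℝ) (y : ℕ → Fin p → ℝ)
    (d : ℕ → Fin r → ℝ) (xh : ℕ → Fin n → ℝ) (z : ℕ → Fin n → ℝ),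
      SigmaSol A B Cm Dm E F x u y d → ObsSol Auio Bu By Du Dy xh u y z →
      Tendsto (fun t => x t - xh t) atTop (nhds 0)

/-- Row index type of the data matrix `Φ_d = [X_p; X_f; U_p; U_f; Y_p; Y_f]`. -/
abbrev RowIdx (n m p : ℕ) := (Fin n ⊕ Fin n) ⊕ ((Fin m ⊕ Fin m) ⊕ (Fin p ⊕ Fin p))

/-- The data matrix `Φ_d = [X_p; X_f; U_p; U_f; Y_p; Y_f] ∈ ℝ^{2(n+m+p)×(T−1)}`. -/
def PhiD {n m p : ℕ} (T : ℕ) (xd : ℕ → Fin n → ℝ) (ud : ℕ → Fin m → ℝ)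
    (yd : ℕ → Fin p → ℝ) : Matrix (RowIdx n m p) (Fin (T - 1)) ℝ :=
  Matrix.of fun i j =>
    match i with
    | Sum.inl (Sum.inl a) => xd j.1 a
    | Sum.inl (Sum.inr a) => xd (j.1 + 1) a
    | Sum.inr (Sum.inl (Sum.inl a)) => ud j.1 a
    | Sum.inr (Sum.inl (Sum.inr a)) => ud (j.1 + 1) a
    | Sum.inr (Sum.inr (Sum.inl a)) => yd j.1 a
    | Sum.inr (Sum.inr (Sum.inr a)) => yd (j.1 + 1) a

/-- The stacked vector `(x(t), x(t+1), u(t), u(t+1), y(t), y(t+1))`. -/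
def stackVec {n m p : ℕ} (x : ℕ → Fin n → ℝ) (u : ℕ → Fin m → ℝ)
    (y : ℕ → Fin p → ℝ) (t : ℕ) : RowIdx n m p → ℝ :=
  fun i =>
    match i with
    | Sum.inl (Sum.inl a) => x t a
    | Sum.inl (Sum.inr a) => x (t + 1) a
    | Sum.inr (Sum.inl (Sum.inl a)) => u t a
    | Sum.inr (Sum.inl (Sum.inr a)) => u (t + 1) a
    | Sum.inr (Sum.inr (Sum.inl a)) => y t a
    | Sum.inr (Sum.inr (Sum.inr a)) => y (t + 1) a

/-- The matrix `[X_p; U_p; U_f; D_p; D_f]` appearing in the Assumption. -/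
def HistMat {n m r : ℕ} (T : ℕ) (xd : ℕ → Fin n → ℝ) (ud : ℕ → Fin m → ℝ)
    (dd : ℕ → Fin r → ℝ) :
    Matrix (Fin n ⊕ ((Fin m ⊕ Fin m) ⊕ (Fin r ⊕ Fin r))) (Fin (T - 1)) ℝ :=
  Matrix.of fun i j =>
    match i with
    | Sum.inl a => xd j.1 a
    | Sum.inr (Sum.inl (Sum.inl a)) => ud j.1 a
    | Sum.inr (Sum.inl (Sum.inr a)) => ud (j.1 + 1) a
    | Sum.inr (Sum.inr (Sum.inl a)) => dd j.1 a
    | Sum.inr (Sum.inr (Sum.inr a)) => dd (j.1 + 1) a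

section Prop1Aux

variable {n m p r : ℕ}
  (A : Matrix (Fin n) (Fin n) ℝ) (B : Matrix (Fin n) (Fin m) ℝ)
  (Cm : Matrix (Fin p) (Fin n) ℝ) (Dm : Matrix (Fin p) (Fin m) ℝ)
  (E : Matrix (Fin n) (Fin r) ℝ) (F : Matrix (Fin p) (Fin r) ℝ)
  (Auio : Matrix (Fin n) (Fin n) ℝ) (Bu : Matrix (Fin n) (Fin m) ℝ)
  (By : Matrix (Fin n) (Fin p) ℝ) (Du : Matrix (Fin n) (Fin m) ℝ)
  (Dy : Matrix (Fin n) (Fin p) ℝ)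

/-- Two matrices agreeing on all vectors are equal. -/
lemma matEqAux {a b : ℕ} {M N : Matrix (Fin a) (Fin b) ℝ}
    (h : ∀ v : Fin b → ℝ, M *ᵥ v = N *ᵥ v) : M = N := by
  ext i j
  simpa using congrFun (h (Pi.single j 1)) i

/-- The one-step "acceptor" identity at the level of vectors. -/
def Key : Prop :=
  ∀ (xv : Fin n → ℝ) (u0 u1 : Fin m → ℝ) (d0 d1 : Fin r → ℝ),
    (A *ᵥ xv + B *ᵥ u0 + E *ᵥ d0)
      - Du *ᵥ u1
      - Dy *ᵥ (Cm *ᵥ (A *ᵥ xv + B *ᵥ u0 + E *ᵥ d0) + Dm *ᵥ u1 + F *ᵥ d1)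
    = Auio *ᵥ (xv - Du *ᵥ u0 - Dy *ᵥ (Cm *ᵥ xv + Dm *ᵥ u0 + F *ᵥ d0))
      + Bu *ᵥ u0 + By *ᵥ (Cm *ᵥ xv + Dm *ᵥ u0 + F *ᵥ d0)

lemma expandL (xv : Fin n → ℝ) (u0 u1 : Fin m → ℝ) (d0 d1 : Fin r → ℝ) :
    (A *ᵥ xv + B *ᵥ u0 + E *ᵥ d0)
      - Du *ᵥ u1
      - Dy *ᵥ (Cm *ᵥ (A *ᵥ xv + B *ᵥ u0 + E *ᵥ d0) + Dm *ᵥ u1 + F *ᵥ d1)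
    = ((1 - Dy * Cm) * A) *ᵥ xv + ((1 - Dy * Cm) * B) *ᵥ u0
      + (-(Du + Dy * Dm)) *ᵥ u1 + ((1 - Dy * Cm) * E) *ᵥ d0
      + (-(Dy * F)) *ᵥ d1 := by
  simp only [Matrix.add_mulVec, Matrix.sub_mulVec, Matrix.neg_mulVec,
    Matrix.one_mulVec, Matrix.mulVec_add, Matrix.mulVec_sub,
    ← Matrix.mulVec_mulVec]
  abel

lemma expandR (xv : Fin n → ℝ) (u0 : Fin m → ℝ) (d0 : Fin r → ℝ) :
    Auio *ᵥ (xv - Du *ᵥ u0 - Dy *ᵥ (Cm *ᵥ xv + Dm *ᵥ u0 + F *ᵥ d0))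
      + Bu *ᵥ u0 + By *ᵥ (Cm *ᵥ xv + Dm *ᵥ u0 + F *ᵥ d0)
    = (Auio - (Auio * Dy - By) * Cm) *ᵥ xv
      + (Bu + By * Dm - Auio * Du - Auio * (Dy * Dm)) *ᵥ u0
      + ((By - Auio * Dy) * F) *ᵥ d0 := by
  simp only [Matrix.add_mulVec, Matrix.sub_mulVec, Matrix.neg_mulVec,
    Matrix.one_mulVec, Matrix.mulVec_add, Matrix.mulVec_sub,
    ← Matrix.mulVec_mulVec]
  abel

/-- The state trajectory generated by an initial state and input/disturbance. -/
def traj (x0 : Fin n → ℝ) (u : ℕ → Fin m → ℝ) (d : ℕ → Fin r → ℝ) :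
    ℕ → Fin n → ℝ
  | 0 => x0
  | t + 1 => A *ᵥ traj x0 u d t + B *ᵥ u t + E *ᵥ d t

/-- A sequence with two prescribed initial values, zero afterwards. -/
def seq2 {α : Type*} [Zero α] (a b : α) : ℕ → α
  | 0 => a
  | 1 => b
  | _ => 0

lemma key_iff_eqs :
    Key A B Cm Dm E F Auio Bu By Du Dy ↔
      ((1 - Dy * Cm) * E + (Auio * Dy - By) * F = 0 ∧
      Dy * F = 0 ∧
      Auio = (1 - Dy * Cm) * A + (Auio * Dy - By) * Cm ∧
      Bu = (1 - Dy * Cm) * B - By * Dm ∧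
      Du = -(Dy * Dm)) := by
  constructor
  · intro k
    have C1 : (1 - Dy * Cm) * A = Auio - (Auio * Dy - By) * Cm := by
      apply matEqAux; intro v
      have h := k v 0 0 0 0
      rw [expandL, expandR] at h
      simpa using h
    have C2 : (1 - Dy * Cm) * B
        = Bu + By * Dm - Auio * Du - Auio * (Dy * Dm) := by
      apply matEqAux; intro v
      have h := k 0 v 0 0 0
      rw [expandL, expandR] at h
      simpa using h
    have C3 : -(Du + Dy * Dm) = (0 : Matrix (Fin n) (Fin m) ℝ) := by
      apply matEqAux; intro v
      have h := k 0 0 v 0 0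
      rw [expandL, expandR] at h
      simpa using h
    have C4 : (1 - Dy * Cm) * E = (By - Auio * Dy) * F := by
      apply matEqAux; intro v
      have h := k 0 0 0 v 0
      rw [expandL, expandR] at h
      simpa using h
    have C5 : -(Dy * F) = (0 : Matrix (Fin n) (Fin r) ℝ) := by
      apply matEqAux; intro v
      have h := k 0 0 0 0 v
      rw [expandL, expandR] at h
      simpa using h
    have h2 : Dy * F = 0 := by rwa [neg_eq_zero] at C5
    have h5 : Du = -(Dy * Dm) :=
      eq_neg_of_add_eq_zero_left (by rwa [neg_eq_zero] at C3)
    have h3 : Auio = (1 - Dy * Cm) * A + (Auio * Dy - By) * Cm :=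
      sub_eq_iff_eq_add.mp C1.symm
    have h1 : (1 - Dy * Cm) * E + (Auio * Dy - By) * F = 0 := by
      have hz : (By - Auio * Dy) + (Auio * Dy - By) = 0 := by abel
      rw [C4, ← Matrix.add_mul, hz, Matrix.zero_mul]
    have h4 : Bu = (1 - Dy * Cm) * B - By * Dm := by
      have e := C2
      rw [h5] at e
      rw [e, Matrix.mul_neg]; abel
    exact ⟨h1, h2, h3, h4, h5⟩
  · rintro ⟨h1, h2, h3, h4, h5⟩ xv u0 u1 d0 d1
    have C1 : (1 - Dy * Cm) * A = Auio - (Auio * Dy - By) * Cm :=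
      eq_sub_iff_add_eq.mpr h3.symm
    have C3 : -(Du + Dy * Dm) = (0 : Matrix (Fin n) (Fin m) ℝ) := by
      rw [h5]; simp
    have C4 : (1 - Dy * Cm) * E = (By - Auio * Dy) * F :=
      (eq_neg_of_add_eq_zero_left h1).trans (by rw [← Matrix.neg_mul, neg_sub])
    have C5 : -(Dy * F) = (0 : Matrix (Fin n) (Fin r) ℝ) := by
      rw [h2]; simp
    have C2 : (1 - Dy * Cm) * B
        = Bu + By * Dm - Auio * Du - Auio * (Dy * Dm) := by
      rw [h4, h5, Matrix.mul_neg]; abel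
    rw [expandL, expandR, C1, C2, C3, C4, C5]
    simp

lemma acceptor_iff_key :
    IsAcceptor A B Cm Dm E F Auio Bu By Du Dy ↔
      Key A B Cm Dm E F Auio Bu By Du Dy := by
  constructor
  · intro hA xv u0 u1 d0 d1
    set u : ℕ → Fin m → ℝ := seq2 u0 u1 with hu
    set d : ℕ → Fin r → ℝ := seq2 d0 d1 with hd
    set x : ℕ → Fin n → ℝ := traj A B E xv u d with hx
    set y : ℕ → Fin p → ℝ :=
      fun t => Cm *ᵥ x t + Dm *ᵥ u t + F *ᵥ d t with hy
    have hsol : SigmaSol A B Cm Dm E F x u y d := fun t => ⟨rfl, rfl⟩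
    obtain ⟨z, hz⟩ := hA x u y d hsol
    have z0 : z 0 = x 0 - Du *ᵥ u 0 - Dy *ᵥ y 0 := by
      rw [(hz 0).2]; abel
    have z1 : z 1 = x 1 - Du *ᵥ u 1 - Dy *ᵥ y 1 := by
      rw [(hz 1).2]; abel
    have hstep := (hz 0).1
    rw [z0, z1] at hstep
    exact hstep
  · intro key x u y d hsol
    refine ⟨fun t => x t - Du *ᵥ u t - Dy *ᵥ y t, fun t => ⟨?_, by
      show x t = x t - Du *ᵥ u t - Dy *ᵥ y t + Du *ᵥ u t + Dy *ᵥ y t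
      abel⟩⟩
    show x (t + 1) - Du *ᵥ u (t + 1) - Dy *ᵥ y (t + 1)
      = Auio *ᵥ (x t - Du *ᵥ u t - Dy *ᵥ y t) + Bu *ᵥ u t + By *ᵥ y t
    rw [(hsol (t + 1)).2, (hsol t).1, (hsol t).2]
    exact key (x t) (u t) (u (t + 1)) (d t) (d (t + 1))

end Prop1Aux

theorem proposition1 {n m p r : ℕ} (hn : 0 < n) (hm : 0 < m) (hp : 0 < p) (hr : 0 < r)
    (A : Matrix (Fin n) (Fin n) ℝ) (B : Matrix (Fin n) (Fin m) ℝ)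
    (Cm : Matrix (Fin p) (Fin n) ℝ) (Dm : Matrix (Fin p) (Fin m) ℝ)
    (E : Matrix (Fin n) (Fin r) ℝ) (F : Matrix (Fin p) (Fin r) ℝ)
    (hEF : (Matrix.fromRows E F).rank = r)
    (Auio : Matrix (Fin n) (Fin n) ℝ) (Bu : Matrix (Fin n) (Fin m) ℝ)
    (By : Matrix (Fin n) (Fin p) ℝ) (Du : Matrix (Fin n) (Fin m) ℝ)
    (Dy : Matrix (Fin n) (Fin p) ℝ) :
    IsAcceptor A B Cm Dm E F Auio Bu By Du Dy ↔
      ((1 - Dy * Cm) * E + (Auio * Dy - By) * F = 0 ∧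
      Dy * F = 0 ∧
      Auio = (1 - Dy * Cm) * A + (Auio * Dy - By) * Cm ∧
      Bu = (1 - Dy * Cm) * B - By * Dm ∧
      Du = -(Dy * Dm)) :=
  (acceptor_iff_key A B Cm Dm E F Auio Bu By Du Dy).trans
    (key_iff_eqs A B Cm Dm E F Auio Bu By Du Dy)
end
end

section
/- (Proposition 2) Suppose the observer candidate Σ̂ is an acceptor for the system Σ. Then Σ̂ is a UIO for Σ (i.e., for every solution (x, u, y, d) of Σ and every solution (x̂, u, y, z) of Σ̂ with the same u and y, the error e(t) = x(t) − x̂(t) tends to 0 as t → ∞) if and only if A_UIO is Schur stable. -/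
open Matrix Filter

noncomputable section

section Aux

open Matrix Filter

attribute [local instance] Matrix.linftyOpNormedRing Matrix.linftyOpNormedAlgebra

lemma entry_norm_le' {N : ℕ} (M : Matrix (Fin N) (Fin N) ℂ) (i j : Fin N) :
    ‖M i j‖ ≤ ‖M‖ := by
  have h : ‖M i j‖₊ ≤ ‖M‖₊ := by
    rw [Matrix.linfty_opNNNorm_def]
    exact le_trans
      (Finset.single_le_sum (f := fun k => ‖M i k‖₊) (fun k _ => zero_le)
        (Finset.mem_univ j))
      (Finset.le_sup (f := fun i => ∑ j, ‖M i j‖₊) (Finset.mem_univ i))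
  exact_mod_cast h

lemma schur_pow_norm_tendsto {N : ℕ} (M : Matrix (Fin N) (Fin N) ℂ)
    (h : ∀ μ ∈ spectrum ℂ M, ‖μ‖ < 1) :
    Tendsto (fun t : ℕ => ‖M ^ t‖) atTop (nhds 0) := by
  haveI : CompleteSpace (Matrix (Fin N) (Fin N) ℂ) := FiniteDimensional.complete ℂ _
  have hρ : spectralRadius ℂ M < 1 := by
    rcases (spectrum ℂ M).eq_empty_or_nonempty with hS | hS
    · rw [spectralRadius]
      simp [hS]
    · obtain ⟨μ₀, hμ₀, hmax⟩ :=
        Set.Finite.exists_maximalFor (fun μ => ‖μ‖₊) _ (Set.finite_coe_iff.mp (Matrix.finite_spectrum (R := ℂ) M)) hS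
      have hle : spectralRadius ℂ M ≤ (‖μ₀‖₊ : ENNReal) := by
        rw [spectralRadius]
        refine iSup₂_le fun k hk => ?_
        rcases le_or_gt ‖k‖₊ ‖μ₀‖₊ with hk' | hk'
        · exact_mod_cast hk'
        · exact_mod_cast hmax hk hk'.le
      refine lt_of_le_of_lt hle ?_
      have : ‖μ₀‖₊ < 1 := by
        have := h μ₀ hμ₀
        simpa [← NNReal.coe_lt_coe] using this
      exact_mod_cast this
  have hg := spectrum.pow_nnnorm_pow_one_div_tendsto_nhds_spectralRadius M
  obtain ⟨c, hc1, hc2⟩ := exists_between hρ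
  have hev : ∀ᶠ t : ℕ in atTop, (‖M ^ t‖₊ : ENNReal) ^ (1 / (t : ℝ)) < c :=
    hg.eventually_lt_const hc1
  have hbound : ∀ᶠ t : ℕ in atTop, (‖M ^ t‖₊ : ENNReal) ≤ c ^ t := by
    filter_upwards [hev, eventually_ge_atTop 1] with t ht ht1
    have htne : (t : ℝ) ≠ 0 := by
      have : (0:ℝ) < t := by exact_mod_cast ht1
      exact this.ne'
    calc (‖M ^ t‖₊ : ENNReal)
        = ((‖M ^ t‖₊ : ENNReal) ^ (1 / (t : ℝ))) ^ (t : ℝ) := by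
          rw [← ENNReal.rpow_mul, one_div, inv_mul_cancel₀ htne, ENNReal.rpow_one]
      _ ≤ c ^ (t : ℝ) := ENNReal.rpow_le_rpow ht.le (Nat.cast_nonneg t)
      _ = c ^ t := ENNReal.rpow_natCast c t
  have hc0 : Tendsto (fun t : ℕ => c ^ t) atTop (nhds 0) :=
    ENNReal.tendsto_pow_atTop_nhds_zero_of_lt_one hc2
  have hnn : Tendsto (fun t : ℕ => (‖M ^ t‖₊ : ENNReal)) atTop (nhds 0) :=
    tendsto_of_tendsto_of_tendsto_of_le_of_le' tendsto_const_nhds hc0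
      (Filter.Eventually.of_forall fun t => zero_le) hbound
  have h1 : Tendsto (fun t : ℕ => ‖M ^ t‖₊) atTop (nhds 0) :=
    ENNReal.tendsto_coe.mp (by simpa using hnn)
  have h2 : Tendsto (fun t : ℕ => (‖M ^ t‖₊ : ℝ)) atTop (nhds ((0 : NNReal) : ℝ)) :=
    NNReal.tendsto_coe.mpr h1
  simpa using h2

set_option maxHeartbeats 1000000 in
lemma schur_pow_entry_tendsto {N : ℕ} (M : Matrix (Fin N) (Fin N) ℝ)
    (h : SchurStable M) (i j : Fin N) :
    Tendsto (fun t : ℕ => (M ^ t) i j) atTop (nhds 0) := by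
  set Mc := M.map (algebraMap ℝ ℂ) with hMc
  have hmap : ∀ t : ℕ, Mc ^ t = (M ^ t).map (algebraMap ℝ ℂ) := fun t => by
    simpa [RingHom.mapMatrix_apply, hMc] using (map_pow (algebraMap ℝ ℂ).mapMatrix M t).symm
  have hn := schur_pow_norm_tendsto Mc h
  have hbound : ∀ t : ℕ, |(M ^ t) i j| ≤ ‖Mc ^ t‖ := fun t => by
    have h1 := entry_norm_le' (Mc ^ t) i j
    have he : (Mc ^ t) i j = (((M ^ t) i j : ℝ) : ℂ) := by rw [hmap t]; rfl
    rw [he, Complex.norm_real, Real.norm_eq_abs] at h1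
    exact h1
  exact squeeze_zero_norm (by simpa [Real.norm_eq_abs] using hbound) hn

lemma schur_pow_mulVec_tendsto {N : ℕ} (M : Matrix (Fin N) (Fin N) ℝ)
    (h : SchurStable M) (v : Fin N → ℝ) :
    Tendsto (fun t : ℕ => (M ^ t) *ᵥ v) atTop (nhds 0) := by
  rw [tendsto_pi_nhds]
  intro i
  have heq : ∀ t : ℕ, ((M ^ t) *ᵥ v) i = ∑ j, (M ^ t) i j * v j := fun t => by
    simp [Matrix.mulVec, dotProduct]
  simp only [heq, Pi.zero_apply]
  have : Tendsto (fun t : ℕ => ∑ j, (M ^ t) i j * v j) atTop (nhds (∑ j : Fin N, 0)) := by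
    exact tendsto_finset_sum _ fun j _ => by
      simpa using (schur_pow_entry_tendsto M h i j).mul_const (v j)
  simpa using this

end Aux

theorem proposition2 {n m p r : ℕ} (hn : 0 < n) (hm : 0 < m) (hp : 0 < p) (hr : 0 < r)
    (A : Matrix (Fin n) (Fin n) ℝ) (B : Matrix (Fin n) (Fin m) ℝ)
    (Cm : Matrix (Fin p) (Fin n) ℝ) (Dm : Matrix (Fin p) (Fin m) ℝ)
    (E : Matrix (Fin n) (Fin r) ℝ) (F : Matrix (Fin p) (Fin r) ℝ)
    (hEF : (Matrix.fromRows E F).rank = r)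
    (Auio : Matrix (Fin n) (Fin n) ℝ) (Bu : Matrix (Fin n) (Fin m) ℝ)
    (By : Matrix (Fin n) (Fin p) ℝ) (Du : Matrix (Fin n) (Fin m) ℝ)
    (Dy : Matrix (Fin n) (Fin p) ℝ)
    (hacc : IsAcceptor A B Cm Dm E F Auio Bu By Du Dy) :
    (∀ (x : ℕ → Fin n → ℝ) (u : ℕ → Fin m → ℝ) (y : ℕ → Fin p → ℝ)
      (d : ℕ → Fin r → ℝ) (xh : ℕ → Fin n → ℝ) (z : ℕ → Fin n → ℝ),
        SigmaSol A B Cm Dm E F x u y d → ObsSol Auio Bu By Du Dy xh u y z →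
        Filter.Tendsto (fun t => x t - xh t) Filter.atTop (nhds 0)) ↔
      SchurStable Auio := by
  constructor
  · -- UIO property implies Schur stability
    intro hUIO μ hμ
    set Mc := Auio.map (algebraMap ℝ ℂ) with hMc
    have hmap : ∀ t : ℕ, Mc ^ t = (Auio ^ t).map (algebraMap ℝ ℂ) := fun t => by
      simpa [RingHom.mapMatrix_apply, hMc] using
        (map_pow (algebraMap ℝ ℂ).mapMatrix Auio t).symm
    -- Step 1: all trajectories of powers tend to zero
    have hvec : ∀ v : Fin n → ℝ,
        Tendsto (fun t : ℕ => (Auio ^ t) *ᵥ v) atTop (nhds 0) := by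
      intro v
      have hsig : SigmaSol A B Cm Dm E F (fun _ => 0) (fun _ => 0) (fun _ => 0)
          (fun _ => 0) := fun t => by
        constructor <;> simp
      have hobs : ObsSol Auio Bu By Du Dy (fun t => (Auio ^ t) *ᵥ (-v)) (fun _ => 0)
          (fun _ => 0) (fun t => (Auio ^ t) *ᵥ (-v)) := fun t => by
        constructor
        · simp [pow_succ', ← Matrix.mulVec_mulVec]
        · simp
      have h := hUIO _ _ _ _ _ _ hsig hobs
      simp only [zero_sub, Matrix.mulVec_neg, neg_neg] at h
      exact h
    -- Step 2: entries of the powers tend to zero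
    have hent : ∀ i j : Fin n,
        Tendsto (fun t : ℕ => (Auio ^ t) i j) atTop (nhds 0) := by
      intro i j
      have h := tendsto_pi_nhds.mp (hvec (Pi.single j 1)) i
      have heq : ∀ t : ℕ, ((Auio ^ t) *ᵥ Pi.single j 1) i = (Auio ^ t) i j := fun t => by
        simp [Matrix.mulVec_single]
      simpa [heq] using h
    -- Step 3: find an eigenvector for μ
    have hdet : (algebraMap ℂ (Matrix (Fin n) (Fin n) ℂ) μ - Mc).det = 0 := by
      have hnu := spectrum.mem_iff.mp hμ
      by_contra hd
      exact hnu ((Matrix.isUnit_iff_isUnit_det _).mpr (isUnit_iff_ne_zero.mpr hd))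
    obtain ⟨w, hw0, hww⟩ := (Matrix.exists_mulVec_eq_zero_iff).mpr hdet
    have heig : Mc *ᵥ w = μ • w := by
      have h1 : (algebraMap ℂ (Matrix (Fin n) (Fin n) ℂ) μ - Mc) *ᵥ w = 0 := hww
      rw [Matrix.sub_mulVec] at h1
      have h2 : (algebraMap ℂ (Matrix (Fin n) (Fin n) ℂ) μ) *ᵥ w = μ • w := by
        rw [Algebra.algebraMap_eq_smul_one, Matrix.smul_mulVec,
          Matrix.one_mulVec]
      rw [h2, sub_eq_zero] at h1
      exact h1.symm
    have hp : ∀ t : ℕ, (Mc ^ t) *ᵥ w = μ ^ t • w := by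
      intro t
      induction t with
      | zero => simp [Matrix.one_mulVec]
      | succ t ih =>
        rw [pow_succ, ← Matrix.mulVec_mulVec, heig, Matrix.mulVec_smul, ih,
          smul_smul, ← pow_succ']
    -- Step 4: conclude |μ| < 1
    obtain ⟨i, hwi⟩ := Function.ne_iff.mp hw0
    have hterm : Tendsto (fun t : ℕ => μ ^ t * w i) atTop (nhds 0) := by
      have heq : ∀ t : ℕ, μ ^ t * w i = ∑ j, ((Auio ^ t) i j : ℂ) * w j := fun t => by
        have h := congrFun (hp t) i
        rw [hmap t] at h
        have hL : ((Auio ^ t).map (algebraMap ℝ ℂ) *ᵥ w) i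
            = ∑ j, ((Auio ^ t) i j : ℂ) * w j := by
          simp [Matrix.mulVec, dotProduct, Matrix.map_apply]
        rw [hL] at h
        simpa using h.symm
      have hsum : Tendsto (fun t : ℕ => ∑ j, ((Auio ^ t) i j : ℂ) * w j) atTop
          (nhds (∑ j : Fin n, 0)) := by
        refine tendsto_finset_sum _ fun j _ => ?_
        have h1 : Tendsto (fun t : ℕ => ((Auio ^ t) i j : ℂ)) atTop (nhds 0) := by
          have := (Complex.continuous_ofReal.tendsto 0).comp (hent i j)
          simpa [Function.comp_def] using this
        simpa using h1.mul_const (w j)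
      simp only [heq]
      simpa using hsum
    by_contra hlt
    push_neg at hlt
    have hpos : 0 < ‖w i‖ := norm_pos_iff.mpr hwi
    have hnt : Tendsto (fun t : ℕ => ‖μ ^ t * w i‖) atTop (nhds 0) := by
      simpa using hterm.norm
    obtain ⟨t, ht⟩ := (hnt.eventually_lt_const hpos).exists
    have hge : ‖w i‖ ≤ ‖μ ^ t * w i‖ := by
      rw [norm_mul, norm_pow]
      nlinarith [one_le_pow₀ (n := t) hlt, norm_nonneg (w i),
        pow_nonneg (norm_nonneg μ) t]
    linarith
  · -- Schur stability implies the UIO property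
    intro hS x u y d xh z hsig hobs
    obtain ⟨zs, hzs⟩ := hacc x u y d hsig
    have hdiff : ∀ t : ℕ, x t - xh t = zs t - z t := fun t => by
      rw [(hzs t).2, (hobs t).2]
      abel
    have key : ∀ t : ℕ, x t - xh t = (Auio ^ t) *ᵥ (x 0 - xh 0) := by
      intro t
      induction t with
      | zero => simp [Matrix.one_mulVec]
      | succ t ih =>
        have hstep : zs (t + 1) - z (t + 1) = Auio *ᵥ (zs t - z t) := by
          rw [(hzs t).1, (hobs t).1, Matrix.mulVec_sub]
          abel
        rw [hdiff (t + 1), hstep, ← hdiff t, ih, Matrix.mulVec_mulVec, ← pow_succ']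
    rw [show (fun t : ℕ => x t - xh t) = fun t : ℕ => (Auio ^ t) *ᵥ (x 0 - xh 0)
      from funext key]
    exact schur_pow_mulVec_tendsto Auio hS _
end
end

section
/- (Theorem 1, (i)⇔(iii)) The observer candidate Σ̂ is a UIO for the system Σ if and only if its matrices satisfy the acceptor equations: (i) (I_n − Dy C) E + (A_UIO Dy − By) F = 0; (ii) Dy F = 0; (iii) A_UIO = (I_n − Dy C) A + (A_UIO Dy − By) C; (iv) Bu = (I_n − Dy C) B − By D; (v) Du = −Dy D, and in addition A_UIO is Schur stable. -/
open Matrix Filter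

noncomputable section

namespace UIOAux

lemma tendsto_pow_mulVec_of_schur {n : ℕ} (hn : 0 < n) (M : Matrix (Fin n) (Fin n) ℝ)
    (h : SchurStable M) (v : Fin n → ℝ) :
    Tendsto (fun t : ℕ => (M ^ t) *ᵥ v) atTop (nhds 0) := by
  haveI : Nonempty (Fin n) := ⟨⟨0, hn⟩⟩
  haveI : Nontrivial (EuclideanSpace ℂ (Fin n)) := inferInstance
  set Mc : Matrix (Fin n) (Fin n) ℂ := M.map (algebraMap ℝ ℂ) with hMc
  set T : EuclideanSpace ℂ (Fin n) →L[ℂ] EuclideanSpace ℂ (Fin n) :=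
    Matrix.toEuclideanCLM (𝕜 := ℂ) Mc with hT
  have hspec : spectrum ℂ T = spectrum ℂ Mc := AlgEquiv.spectrum_eq _ _
  have hr : spectralRadius ℂ T < 1 := by
    have h1 : ((1 : NNReal) : ENNReal) = (1 : ENNReal) := by norm_num
    rw [← h1]
    refine spectrum.spectralRadius_lt_of_forall_lt T ?_
    intro z hz
    rw [hspec] at hz
    have := h z hz
    simpa [← NNReal.coe_lt_coe] using this
  obtain ⟨c, hc1, hc2⟩ := ENNReal.lt_iff_exists_nnreal_btwn.mp hr
  have hg := spectrum.pow_nnnorm_pow_one_div_tendsto_nhds_spectralRadius T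
  have hev : ∀ᶠ k : ℕ in atTop, (‖T ^ k‖₊ : ENNReal) ^ (1 / (k : ℝ)) < (c : ENNReal) :=
    hg.eventually_lt_const hc1
  have hcR : (c : ℝ) < 1 := by
    have := ENNReal.coe_lt_coe.mp (by simpa using hc2)
    exact_mod_cast this
  have hub : ∀ᶠ k : ℕ in atTop, ‖T ^ k‖ ≤ (c : ℝ) ^ k := by
    filter_upwards [hev, eventually_ge_atTop 1] with k hk hk1
    have hkne : (k : ℝ) ≠ 0 := by positivity
    have h2 : ((‖T ^ k‖₊ : ENNReal) ^ (1 / (k : ℝ))) ^ (k : ℝ) ≤ (c : ENNReal) ^ (k : ℝ) :=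
      ENNReal.rpow_le_rpow hk.le (by positivity)
    rw [← ENNReal.rpow_mul, one_div_mul_cancel hkne, ENNReal.rpow_one,
      ENNReal.rpow_natCast, ← ENNReal.coe_pow, ENNReal.coe_le_coe] at h2
    calc ‖T ^ k‖ = ((‖T ^ k‖₊ : NNReal) : ℝ) := rfl
    _ ≤ ((c ^ k : NNReal) : ℝ) := by exact_mod_cast h2
    _ = (c : ℝ) ^ k := by push_cast; ring
  have hnorm0 : Tendsto (fun k : ℕ => ‖T ^ k‖) atTop (nhds 0) := by
    have hcnn : (0 : ℝ) ≤ (c : ℝ) := c.coe_nonneg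
    refine squeeze_zero' (Eventually.of_forall fun k => norm_nonneg _) hub ?_
    exact tendsto_pow_atTop_nhds_zero_of_lt_one hcnn hcR
  have hT0 : Tendsto (fun k : ℕ => T ^ k) atTop (nhds 0) :=
    tendsto_zero_iff_norm_tendsto_zero.mpr hnorm0
  set vc : Fin n → ℂ := fun i => algebraMap ℝ ℂ (v i) with hvc
  set w : EuclideanSpace ℂ (Fin n) := (WithLp.equiv 2 (Fin n → ℂ)).symm vc with hw
  have happ : Tendsto (fun k : ℕ => (T ^ k) w) atTop (nhds 0) := by
    have hcont := (ContinuousLinearMap.apply ℂ (EuclideanSpace ℂ (Fin n)) w).continuous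
    have := (hcont.tendsto 0).comp hT0
    simpa only [Function.comp_def, ContinuousLinearMap.apply_apply, ContinuousLinearMap.zero_apply] using this
  have hTk : ∀ k : ℕ, (T ^ k) w = (WithLp.equiv 2 (Fin n → ℂ)).symm ((Mc ^ k) *ᵥ vc) := by
    intro k
    have : T ^ k = Matrix.toEuclideanCLM (𝕜 := ℂ) (Mc ^ k) := by
      rw [hT, ← map_pow]
    rw [this, hw, WithLp.equiv_symm_apply]
    rfl
  have hpi : Tendsto (fun k : ℕ => (Mc ^ k) *ᵥ vc) atTop (nhds 0) := by
    have hcont := PiLp.continuous_ofLp (p := 2) (β := fun _ : Fin n => ℂ)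
    have := (hcont.tendsto 0).comp happ
    simp only [Function.comp_def, hTk] at this
    simpa using this
  rw [tendsto_pi_nhds] at hpi ⊢
  intro i
  have hi := hpi i
  have hre := (Complex.continuous_re.tendsto 0).comp hi
  have heq : ∀ k : ℕ, ((Mc ^ k) *ᵥ vc) i = algebraMap ℝ ℂ (((M ^ k) *ᵥ v) i) := by
    intro k
    rw [RingHom.map_mulVec]
    congr 1
    rw [hMc, ← RingHom.mapMatrix_apply, ← map_pow, RingHom.mapMatrix_apply]
  simp only [Function.comp_def, heq] at hre
  simpa using hre

lemma schur_of_tendsto {n : ℕ} (M : Matrix (Fin n) (Fin n) ℝ)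
    (h : ∀ v : Fin n → ℝ, Tendsto (fun t : ℕ => (M ^ t) *ᵥ v) atTop (nhds 0)) :
    SchurStable M := by
  intro μ hμ
  by_contra hge
  push_neg at hge
  set Mc : Matrix (Fin n) (Fin n) ℂ := M.map (algebraMap ℝ ℂ) with hMc
  have hμ' : μ ∈ spectrum ℂ (Matrix.toLinAlgEquiv' Mc) := by
    rwa [AlgEquiv.spectrum_eq]
  have heig : Module.End.HasEigenvalue (Matrix.toLinAlgEquiv' Mc) μ :=
    Module.End.HasEigenvalue.of_mem_spectrum hμ'
  obtain ⟨w, hw⟩ := heig.exists_hasEigenvector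
  have hwne : w ≠ 0 := hw.right
  have hmul : Mc *ᵥ w = μ • w := by
    have := hw.apply_eq_smul
    simpa using this
  have hpow : ∀ k : ℕ, (Mc ^ k) *ᵥ w = μ ^ k • w := by
    intro k
    induction k with
    | zero => simp
    | succ k ih =>
      rw [pow_succ', ← Matrix.mulVec_mulVec, ih, Matrix.mulVec_smul, hmul, pow_succ',
        smul_smul, mul_comm]
  obtain ⟨i, hi⟩ : ∃ i, w i ≠ 0 := by
    by_contra hc
    push_neg at hc
    exact hwne (funext hc)
  set a : Fin n → ℝ := fun j => (w j).re with ha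
  set b : Fin n → ℝ := fun j => (w j).im with hb
  have hcoord : ∀ k : ℕ, ((Mc ^ k) *ᵥ w) i =
      algebraMap ℝ ℂ (((M ^ k) *ᵥ a) i) + algebraMap ℝ ℂ (((M ^ k) *ᵥ b) i) * Complex.I := by
    intro k
    have hMk : Mc ^ k = (M ^ k).map (algebraMap ℝ ℂ) := by
      rw [hMc, ← RingHom.mapMatrix_apply, ← map_pow, RingHom.mapMatrix_apply]
    rw [hMk]
    simp only [Matrix.mulVec, dotProduct, Matrix.map_apply]
    rw [map_sum, map_sum, Finset.sum_mul, ← Finset.sum_add_distrib]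
    congr 1
    ext j
    have : w j = (algebraMap ℝ ℂ (a j)) + (algebraMap ℝ ℂ (b j)) * Complex.I := by
      simp [ha, hb, Complex.ext_iff]
    rw [this]
    push_cast
    ring
  have hta := (Complex.continuous_ofReal.tendsto 0).comp ((tendsto_pi_nhds.mp (h a)) i)
  have htb := (Complex.continuous_ofReal.tendsto 0).comp ((tendsto_pi_nhds.mp (h b)) i)
  have htc : Tendsto (fun k : ℕ => ((Mc ^ k) *ᵥ w) i) atTop (nhds 0) := by
    have := hta.add (htb.mul_const Complex.I)
    simp only [Function.comp_def] at this ⊢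
    simp only [hcoord]
    simpa using this
  have hnorm := htc.norm
  simp only [norm_zero] at hnorm
  have hlow : ∀ k : ℕ, ‖w i‖ ≤ ‖((Mc ^ k) *ᵥ w) i‖ := by
    intro k
    rw [hpow k]
    simp only [Pi.smul_apply, smul_eq_mul, norm_mul, norm_pow]
    calc ‖w i‖ = 1 * ‖w i‖ := by ring
    _ ≤ ‖μ‖ ^ k * ‖w i‖ := by
        have h1 : (1 : ℝ) ≤ ‖μ‖ ^ k := one_le_pow₀ hge
        exact mul_le_mul_of_nonneg_right h1 (norm_nonneg _)
  have hle : ‖w i‖ ≤ 0 := ge_of_tendsto' hnorm hlow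
  have : (0 : ℝ) < ‖w i‖ := norm_pos_iff.mpr hi
  linarith

lemma eq_of_mulVec_eq {a b : ℕ} {M N : Matrix (Fin a) (Fin b) ℝ}
    (h : ∀ v, M *ᵥ v = N *ᵥ v) : M = N := by
  ext i j
  have := congrFun (h (Pi.single j 1)) i
  simpa using this

variable {n m p r : ℕ}
variable {A : Matrix (Fin n) (Fin n) ℝ} {B : Matrix (Fin n) (Fin m) ℝ}
  {Cm : Matrix (Fin p) (Fin n) ℝ} {Dm : Matrix (Fin p) (Fin m) ℝ}
  {E : Matrix (Fin n) (Fin r) ℝ} {F : Matrix (Fin p) (Fin r) ℝ}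
  {Auio : Matrix (Fin n) (Fin n) ℝ} {Bu : Matrix (Fin n) (Fin m) ℝ}
  {By : Matrix (Fin n) (Fin p) ℝ} {Du : Matrix (Fin n) (Fin m) ℝ}
  {Dy : Matrix (Fin n) (Fin p) ℝ}

lemma step_eq
    (h1 : (1 - Dy * Cm) * E + (Auio * Dy - By) * F = 0)
    (h2 : Dy * F = 0)
    (h3 : Auio = (1 - Dy * Cm) * A + (Auio * Dy - By) * Cm)
    (h4 : Bu = (1 - Dy * Cm) * B - By * Dm)
    (h5 : Du = -(Dy * Dm))
    {x : ℕ → Fin n → ℝ} {u : ℕ → Fin m → ℝ} {y : ℕ → Fin p → ℝ} {d : ℕ → Fin r → ℝ}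
    (hsig : SigmaSol A B Cm Dm E F x u y d) (t : ℕ) :
    x (t + 1) - Du *ᵥ u (t + 1) - Dy *ᵥ y (t + 1)
      = Auio *ᵥ (x t - Du *ᵥ u t - Dy *ᵥ y t) + Bu *ᵥ u t + By *ᵥ y t := by
  obtain ⟨hx, hy⟩ := hsig t
  obtain ⟨-, hy'⟩ := hsig (t + 1)
  rw [hy', hx, hy]
  have h1v := congrArg (fun M => M *ᵥ (d t)) h1
  have h2v := congrArg (fun M => M *ᵥ (d (t + 1))) h2
  have h3v := congrArg (fun M => M *ᵥ (x t)) h3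
  have h4v := congrArg (fun M => M *ᵥ (u t)) h4
  have h5v := congrArg (fun M => M *ᵥ (u (t + 1))) h5
  have h5v2 := congrArg (fun N => (Auio * N) *ᵥ (u t)) h5
  simp only [Matrix.mulVec_add, Matrix.mulVec_sub, Matrix.add_mulVec, Matrix.sub_mulVec,
    Matrix.neg_mulVec, Matrix.mulVec_neg, Matrix.mulVec_mulVec, Matrix.one_mulVec,
    Matrix.mulVec_zero, Matrix.zero_mulVec, Matrix.mul_add, Matrix.add_mul, Matrix.mul_sub,
    Matrix.sub_mul, Matrix.neg_mul, Matrix.mul_neg, Matrix.one_mul, Matrix.mul_one,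
    Matrix.mul_assoc, Matrix.mul_zero, Matrix.zero_mul,
    add_zero, zero_add, sub_zero, zero_sub, neg_zero, neg_neg] at h1v h2v h3v h4v h5v h5v2 ⊢
  linear_combination h1v - h2v - h3v - h4v - h5v + h5v2

lemma key_identity
    (hacc : IsAcceptor A B Cm Dm E F Auio Bu By Du Dy)
    (x0 : Fin n → ℝ) (u0 u1 : Fin m → ℝ) (d0 d1 : Fin r → ℝ) :
    (A *ᵥ x0 + B *ᵥ u0 + E *ᵥ d0) - Du *ᵥ u1
      - Dy *ᵥ (Cm *ᵥ (A *ᵥ x0 + B *ᵥ u0 + E *ᵥ d0) + Dm *ᵥ u1 + F *ᵥ d1)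
    = Auio *ᵥ (x0 - Du *ᵥ u0 - Dy *ᵥ (Cm *ᵥ x0 + Dm *ᵥ u0 + F *ᵥ d0))
      + Bu *ᵥ u0 + By *ᵥ (Cm *ᵥ x0 + Dm *ᵥ u0 + F *ᵥ d0) := by
  classical
  set uu : ℕ → Fin m → ℝ := fun t => match t with | 0 => u0 | _ + 1 => u1 with huu
  set dd : ℕ → Fin r → ℝ := fun t => match t with | 0 => d0 | _ + 1 => d1 with hdd
  let x : ℕ → Fin n → ℝ := fun t =>
    Nat.rec x0 (fun s xs => A *ᵥ xs + B *ᵥ uu s + E *ᵥ dd s) t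
  set y : ℕ → Fin p → ℝ := fun t => Cm *ᵥ x t + Dm *ᵥ uu t + F *ᵥ dd t with hy
  obtain ⟨z, hz⟩ := hacc x uu y dd (fun t => ⟨rfl, rfl⟩)
  have h20 : (x0 : Fin n → ℝ)
      = z 0 + Du *ᵥ u0 + Dy *ᵥ (Cm *ᵥ x0 + Dm *ᵥ u0 + F *ᵥ d0) := (hz 0).2
  have h21 : (A *ᵥ x0 + B *ᵥ u0 + E *ᵥ d0 : Fin n → ℝ)
      = z 1 + Du *ᵥ u1
        + Dy *ᵥ (Cm *ᵥ (A *ᵥ x0 + B *ᵥ u0 + E *ᵥ d0) + Dm *ᵥ u1 + F *ᵥ d1) := (hz 1).2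
  have h10 : z 1 = Auio *ᵥ z 0 + Bu *ᵥ u0
      + By *ᵥ (Cm *ᵥ x0 + Dm *ᵥ u0 + F *ᵥ d0) := (hz 0).1
  have hz0 : z 0 = x0 - Du *ᵥ u0 - Dy *ᵥ (Cm *ᵥ x0 + Dm *ᵥ u0 + F *ᵥ d0) := by
    linear_combination -h20
  rw [hz0] at h10
  rw [h10] at h21
  linear_combination h21

lemma forward_eqs
    (hacc : IsAcceptor A B Cm Dm E F Auio Bu By Du Dy) :
    (1 - Dy * Cm) * E + (Auio * Dy - By) * F = 0 ∧
    Dy * F = 0 ∧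
    Auio = (1 - Dy * Cm) * A + (Auio * Dy - By) * Cm ∧
    Bu = (1 - Dy * Cm) * B - By * Dm ∧
    Du = -(Dy * Dm) := by
  have key := key_identity hacc
  have h5 : Du = -(Dy * Dm) := by
    apply eq_of_mulVec_eq; intro v
    have e5 := key 0 0 v 0 0
    simp only [Matrix.mulVec_add, Matrix.mulVec_sub, Matrix.add_mulVec, Matrix.sub_mulVec,
      Matrix.neg_mulVec, Matrix.mulVec_neg, Matrix.mulVec_mulVec, Matrix.one_mulVec,
      Matrix.mulVec_zero, Matrix.zero_mulVec, Matrix.mul_add, Matrix.add_mul, Matrix.mul_sub,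
      Matrix.sub_mul, Matrix.neg_mul, Matrix.mul_neg, Matrix.one_mul, Matrix.mul_one,
      Matrix.mul_assoc, Matrix.mul_zero, Matrix.zero_mul,
      add_zero, zero_add, sub_zero, zero_sub, neg_zero, neg_neg] at e5 ⊢
    linear_combination -e5
  have h2 : Dy * F = 0 := by
    apply eq_of_mulVec_eq; intro v
    have e2 := key 0 0 0 0 v
    simp only [Matrix.mulVec_add, Matrix.mulVec_sub, Matrix.add_mulVec, Matrix.sub_mulVec,
      Matrix.neg_mulVec, Matrix.mulVec_neg, Matrix.mulVec_mulVec, Matrix.one_mulVec,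
      Matrix.mulVec_zero, Matrix.zero_mulVec, Matrix.mul_add, Matrix.add_mul, Matrix.mul_sub,
      Matrix.sub_mul, Matrix.neg_mul, Matrix.mul_neg, Matrix.one_mul, Matrix.mul_one,
      Matrix.mul_assoc, Matrix.mul_zero, Matrix.zero_mul,
      add_zero, zero_add, sub_zero, zero_sub, neg_zero, neg_neg] at e2 ⊢
    linear_combination -e2
  have h1 : (1 - Dy * Cm) * E + (Auio * Dy - By) * F = 0 := by
    apply eq_of_mulVec_eq; intro v
    have e1 := key 0 0 0 v 0
    simp only [Matrix.mulVec_add, Matrix.mulVec_sub, Matrix.add_mulVec, Matrix.sub_mulVec,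
      Matrix.neg_mulVec, Matrix.mulVec_neg, Matrix.mulVec_mulVec, Matrix.one_mulVec,
      Matrix.mulVec_zero, Matrix.zero_mulVec, Matrix.mul_add, Matrix.add_mul, Matrix.mul_sub,
      Matrix.sub_mul, Matrix.neg_mul, Matrix.mul_neg, Matrix.one_mul, Matrix.mul_one,
      Matrix.mul_assoc, Matrix.mul_zero, Matrix.zero_mul,
      add_zero, zero_add, sub_zero, zero_sub, neg_zero, neg_neg] at e1 ⊢
    linear_combination e1
  have h3 : Auio = (1 - Dy * Cm) * A + (Auio * Dy - By) * Cm := by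
    apply eq_of_mulVec_eq; intro v
    have e3 := key v 0 0 0 0
    simp only [Matrix.mulVec_add, Matrix.mulVec_sub, Matrix.add_mulVec, Matrix.sub_mulVec,
      Matrix.neg_mulVec, Matrix.mulVec_neg, Matrix.mulVec_mulVec, Matrix.one_mulVec,
      Matrix.mulVec_zero, Matrix.zero_mulVec, Matrix.mul_add, Matrix.add_mul, Matrix.mul_sub,
      Matrix.sub_mul, Matrix.neg_mul, Matrix.mul_neg, Matrix.one_mul, Matrix.mul_one,
      Matrix.mul_assoc, Matrix.mul_zero, Matrix.zero_mul,
      add_zero, zero_add, sub_zero, zero_sub, neg_zero, neg_neg] at e3 ⊢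
    linear_combination -e3
  have h4 : Bu = (1 - Dy * Cm) * B - By * Dm := by
    apply eq_of_mulVec_eq; intro v
    have e4 := key 0 v 0 0 0
    have h5v2 := congrArg (fun N => (Auio * N) *ᵥ v) h5
    simp only [Matrix.mulVec_add, Matrix.mulVec_sub, Matrix.add_mulVec, Matrix.sub_mulVec,
      Matrix.neg_mulVec, Matrix.mulVec_neg, Matrix.mulVec_mulVec, Matrix.one_mulVec,
      Matrix.mulVec_zero, Matrix.zero_mulVec, Matrix.mul_add, Matrix.add_mul, Matrix.mul_sub,
      Matrix.sub_mul, Matrix.neg_mul, Matrix.mul_neg, Matrix.one_mul, Matrix.mul_one,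
      Matrix.mul_assoc, Matrix.mul_zero, Matrix.zero_mul,
      add_zero, zero_add, sub_zero, zero_sub, neg_zero, neg_neg] at e4 h5v2 ⊢
    linear_combination -e4 + h5v2
  exact ⟨h1, h2, h3, h4, h5⟩

end UIOAux

theorem theorem1_i_iff_iii {n m p r : ℕ} (hn : 0 < n) (hm : 0 < m) (hp : 0 < p) (hr : 0 < r)
    (A : Matrix (Fin n) (Fin n) ℝ) (B : Matrix (Fin n) (Fin m) ℝ)
    (Cm : Matrix (Fin p) (Fin n) ℝ) (Dm : Matrix (Fin p) (Fin m) ℝ)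
    (E : Matrix (Fin n) (Fin r) ℝ) (F : Matrix (Fin p) (Fin r) ℝ)
    (hEF : (Matrix.fromRows E F).rank = r)
    (Auio : Matrix (Fin n) (Fin n) ℝ) (Bu : Matrix (Fin n) (Fin m) ℝ)
    (By : Matrix (Fin n) (Fin p) ℝ) (Du : Matrix (Fin n) (Fin m) ℝ)
    (Dy : Matrix (Fin n) (Fin p) ℝ) :
    IsUIO A B Cm Dm E F Auio Bu By Du Dy ↔
      (((1 - Dy * Cm) * E + (Auio * Dy - By) * F = 0 ∧
      Dy * F = 0 ∧
      Auio = (1 - Dy * Cm) * A + (Auio * Dy - By) * Cm ∧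
      Bu = (1 - Dy * Cm) * B - By * Dm ∧
      Du = -(Dy * Dm)) ∧ SchurStable Auio) := by
  constructor
  · rintro ⟨hacc, htend⟩
    refine ⟨UIOAux.forward_eqs hacc, ?_⟩
    apply UIOAux.schur_of_tendsto
    intro v
    have hsig0 : SigmaSol A B Cm Dm E F (fun _ => 0) (fun _ => 0) (fun _ => 0) (fun _ => 0) := by
      intro t
      constructor <;> simp
    have hobs0 : ObsSol Auio Bu By Du Dy (fun t => (Auio ^ t) *ᵥ v) (fun _ => 0)
        (fun _ => 0) (fun t => (Auio ^ t) *ᵥ v) := by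
      intro t
      refine ⟨?_, by simp⟩
      simp [Matrix.mulVec_mulVec, ← pow_succ']
    have ht := htend _ _ _ _ _ _ hsig0 hobs0
    have ht2 := ht.neg
    simpa using ht2
  · rintro ⟨⟨h1, h2, h3, h4, h5⟩, hschur⟩
    constructor
    · intro x u y d hsig
      exact ⟨fun t => x t - Du *ᵥ u t - Dy *ᵥ y t,
        fun t => ⟨UIOAux.step_eq h1 h2 h3 h4 h5 hsig t, by ring⟩⟩
    · intro x u y d xh z hsig hobs
      have he : ∀ t, x (t + 1) - xh (t + 1) = Auio *ᵥ (x t - xh t) := by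
        intro t
        have ho1 := (hobs t).1
        have ho2 := (hobs t).2
        have ho2' := (hobs (t + 1)).2
        have hwz : x (t + 1) - Du *ᵥ u (t + 1) - Dy *ᵥ y (t + 1) - z (t + 1)
            = Auio *ᵥ (x t - Du *ᵥ u t - Dy *ᵥ y t) - Auio *ᵥ z t := by
          rw [UIOAux.step_eq h1 h2 h3 h4 h5 hsig t, ho1]
          ring
        rw [← Matrix.mulVec_sub] at hwz
        calc x (t + 1) - xh (t + 1)
            = x (t + 1) - Du *ᵥ u (t + 1) - Dy *ᵥ y (t + 1) - z (t + 1) := by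
              rw [ho2']; ring
          _ = Auio *ᵥ (x t - Du *ᵥ u t - Dy *ᵥ y t - z t) := hwz
          _ = Auio *ᵥ (x t - xh t) := by
              congr 1
              rw [ho2]
              ring
      have hpow : ∀ t, x t - xh t = (Auio ^ t) *ᵥ (x 0 - xh 0) := by
        intro t
        induction t with
        | zero => simp
        | succ t ih => rw [he t, ih, Matrix.mulVec_mulVec, ← pow_succ']
      have hT := UIOAux.tendsto_pow_mulVec_of_schur hn Auio hschur (x 0 - xh 0)
      have hfe : (fun t => x t - xh t) = fun t => (Auio ^ t) *ᵥ (x 0 - xh 0) := funext hpow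
      rw [hfe]
      exact hT
end
end

section
/- (Theorem 2, (i)⇔(v)) There exists an observer candidate Σ̂ (i.e., matrices A_UIO ∈ ℝ^{n×n}, Bu ∈ ℝ^{n×m}, By ∈ ℝ^{n×p}, Du ∈ ℝ^{n×m}, Dy ∈ ℝ^{n×p}) that is a UIO for the system Σ if and only if there exist matrices A_UIO, Bu, By, Du, Dy with A_UIO Schur stable satisfying the acceptor equations: (i) (I_n − Dy C) E + (A_UIO Dy − By) F = 0; (ii) Dy F = 0; (iii) A_UIO = (I_n − Dy C) A + (A_UIO Dy − By) C; (iv) Bu = (I_n − Dy C) B − By D; (v) Du = −Dy D. -/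
open Matrix Filter

noncomputable section

namespace UIOAux2

open scoped NNReal ENNReal

attribute [local instance] Matrix.linftyOpNormedAddCommGroup Matrix.linftyOpNormedRing
  Matrix.linftyOpNormedAlgebra

local instance {n : ℕ} : CompleteSpace (Matrix (Fin n) (Fin n) ℂ) :=
  FiniteDimensional.complete ℂ _

variable {n m p r : ℕ}

lemma norm_pow_tendsto [NeZero n] (M : Matrix (Fin n) (Fin n) ℂ)
    (h : ∀ μ ∈ spectrum ℂ M, ‖μ‖ < 1) :
    Tendsto (fun t : ℕ => ‖M ^ t‖) atTop (nhds 0) := by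
  have hρ : spectralRadius ℂ M < 1 := by
    have := spectrum.spectralRadius_lt_of_forall_lt (a := M) (r := 1)
      (fun z hz => by simpa [← NNReal.coe_lt_coe] using h z hz)
    simpa using this
  obtain ⟨c, hc1, hc2⟩ := exists_between hρ
  have hctop : c ≠ ⊤ := (hc2.trans_le le_top).ne
  have hG := spectrum.pow_nnnorm_pow_one_div_tendsto_nhds_spectralRadius M
  have hev : ∀ᶠ t : ℕ in atTop, (‖M ^ t‖₊ : ℝ≥0∞) ^ (1 / (t : ℝ)) < c :=
    hG.eventually (tendsto_id.eventually_lt_const hc1 : _)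
  have hbound : ∀ᶠ t : ℕ in atTop, ‖M ^ t‖ ≤ c.toReal ^ t := by
    filter_upwards [hev, eventually_ge_atTop 1] with t ht ht1
    have htne : (t : ℝ) ≠ 0 := by positivity
    have h1 : ((‖M ^ t‖₊ : ℝ≥0∞) ^ (1 / (t : ℝ))) ^ (t : ℝ) ≤ c ^ (t : ℝ) :=
      ENNReal.rpow_le_rpow ht.le (by positivity)
    rw [← ENNReal.rpow_mul, one_div, inv_mul_cancel₀ htne, ENNReal.rpow_one] at h1
    have h2 : ‖M ^ t‖ ≤ (c ^ (t : ℝ)).toReal := by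
      have := ENNReal.toReal_mono
        (ENNReal.rpow_ne_top_of_nonneg (by positivity : (0:ℝ) ≤ (t:ℝ)) hctop) h1
      simpa using this
    calc ‖M ^ t‖ ≤ (c ^ (t : ℝ)).toReal := h2
      _ = c.toReal ^ t := by
          rw [ENNReal.rpow_natCast, ENNReal.toReal_pow]
  have hc2' : c.toReal < 1 := by
    rw [← ENNReal.toReal_one]
    exact ENNReal.toReal_strict_mono (by simp) hc2
  have hpow : Tendsto (fun t : ℕ => c.toReal ^ t) atTop (nhds 0) :=
    tendsto_pow_atTop_nhds_zero_of_lt_one ENNReal.toReal_nonneg hc2'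
  exact squeeze_zero' (Eventually.of_forall fun t => norm_nonneg _) hbound hpow

lemma entry_norm_le (X : Matrix (Fin n) (Fin n) ℂ) (i j : Fin n) : ‖X i j‖ ≤ ‖X‖ := by
  have h1 : ‖X i j‖₊ ≤ ∑ k, ‖X i k‖₊ :=
    Finset.single_le_sum (f := fun k => ‖X i k‖₊) (fun _ _ => zero_le) (Finset.mem_univ j)
  have h2 : (∑ k, ‖X i k‖₊) ≤ ‖X‖₊ := by
    rw [Matrix.linfty_opNNNorm_def]
    exact Finset.le_sup (f := fun i => ∑ k, ‖X i k‖₊) (Finset.mem_univ i)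
  exact_mod_cast h1.trans h2

lemma map_pow' (M : Matrix (Fin n) (Fin n) ℝ) (t : ℕ) :
    (M.map (algebraMap ℝ ℂ)) ^ t = (M ^ t).map (algebraMap ℝ ℂ) := by
  simpa using (map_pow ((algebraMap ℝ ℂ).mapMatrix) M t).symm

lemma schur_mulVec_tendsto (M : Matrix (Fin n) (Fin n) ℝ)
    (h : ∀ μ ∈ spectrum ℂ (M.map (algebraMap ℝ ℂ)), ‖μ‖ < 1) (v : Fin n → ℝ) :
    Tendsto (fun t : ℕ => (M ^ t) *ᵥ v) atTop (nhds 0) := by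
  rcases Nat.eq_zero_or_pos n with hn | hn
  · subst hn
    have : ∀ t : ℕ, (M ^ t) *ᵥ v = 0 := fun t => Subsingleton.elim _ _
    simpa [this] using tendsto_const_nhds
  have : NeZero n := ⟨hn.ne'⟩
  have hnorm := norm_pow_tendsto (M.map (algebraMap ℝ ℂ)) h
  rw [tendsto_pi_nhds]
  intro i
  refine squeeze_zero_norm (fun t => ?_)
    (a := fun t => ‖(M.map (algebraMap ℝ ℂ)) ^ t‖ * ∑ j, |v j|)
    (by simpa using hnorm.mul_const (∑ j, |v j|))
  · have hrw : ((M ^ t) *ᵥ v) i = ∑ j, (M ^ t) i j * v j := rfl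
    calc ‖((M ^ t) *ᵥ v) i‖ ≤ ∑ j, |(M ^ t) i j| * |v j| := by
          rw [Real.norm_eq_abs, hrw]
          exact (Finset.abs_sum_le_sum_abs _ _).trans (le_of_eq (by simp [abs_mul]))
      _ ≤ ∑ j, ‖(M.map (algebraMap ℝ ℂ)) ^ t‖ * |v j| := by
          apply Finset.sum_le_sum; intro j _
          have habs : |(M ^ t) i j| = ‖((M ^ t).map (algebraMap ℝ ℂ)) i j‖ := by
            simp [Matrix.map_apply]
          rw [habs, ← map_pow']
          exact mul_le_mul_of_nonneg_right (entry_norm_le _ i j) (abs_nonneg _)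
      _ = ‖(M.map (algebraMap ℝ ℂ)) ^ t‖ * ∑ j, |v j| := by rw [Finset.mul_sum]

lemma schur_of_mulVec_tendsto (M : Matrix (Fin n) (Fin n) ℝ)
    (h : ∀ v : Fin n → ℝ, Tendsto (fun t : ℕ => (M ^ t) *ᵥ v) atTop (nhds 0)) :
    ∀ μ ∈ spectrum ℂ (M.map (algebraMap ℝ ℂ)), ‖μ‖ < 1 := by
  intro μ hμ
  by_contra hge
  push_neg at hge
  set Mc := M.map (algebraMap ℝ ℂ) with hMc
  rw [spectrum.mem_iff] at hμ
  have hdet : (algebraMap ℂ (Matrix (Fin n) (Fin n) ℂ) μ - Mc).det = 0 := by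
    by_contra hd
    exact hμ ((Matrix.isUnit_iff_isUnit_det _).2 (isUnit_iff_ne_zero.2 hd))
  obtain ⟨v, hv0, hv⟩ := (Matrix.exists_mulVec_eq_zero_iff).2 hdet
  have heig : Mc *ᵥ v = μ • v := by
    rw [Matrix.sub_mulVec] at hv
    have halg : algebraMap ℂ (Matrix (Fin n) (Fin n) ℂ) μ *ᵥ v = μ • v := by
      rw [Algebra.algebraMap_eq_smul_one, Matrix.smul_mulVec, Matrix.one_mulVec]
    rw [halg] at hv
    exact (sub_eq_zero.mp hv).symm
  have hpow : ∀ t : ℕ, (Mc ^ t) *ᵥ v = (μ ^ t) • v := by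
    intro t
    induction t with
    | zero => simp [Matrix.one_mulVec]
    | succ t ih =>
        rw [pow_succ', ← Matrix.mulVec_mulVec, ih, Matrix.mulVec_smul, heig, pow_succ',
          smul_smul, mul_comm]
  obtain ⟨j, hj⟩ : ∃ j, v j ≠ 0 := Function.ne_iff.mp hv0
  have hcomp : ∀ (w : Fin n → ℂ) (t : ℕ),
      ((M ^ t) *ᵥ (fun i => (w i).re)) j = (((M.map (algebraMap ℝ ℂ)) ^ t *ᵥ w) j).re := by
    intro w t
    rw [map_pow']
    simp [Matrix.mulVec, dotProduct, Matrix.map_apply, Complex.mul_re]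
  have hre := tendsto_pi_nhds.1 (h (fun i => (v i).re)) j
  have him := tendsto_pi_nhds.1 (h (fun i => (v i).im)) j
  have hre' : Tendsto (fun t : ℕ => ((μ ^ t) * v j).re) atTop (nhds 0) := by
    refine hre.congr fun t => ?_
    rw [hcomp v t, ← hMc, hpow t]
    simp
  have hcompim : ∀ t : ℕ,
      ((M ^ t) *ᵥ (fun i => (v i).im)) j = (((M.map (algebraMap ℝ ℂ)) ^ t *ᵥ v) j).im := by
    intro t
    rw [map_pow']
    simp [Matrix.mulVec, dotProduct, Matrix.map_apply, Complex.mul_im]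
  have him' : Tendsto (fun t : ℕ => ((μ ^ t) * v j).im) atTop (nhds 0) := by
    refine him.congr fun t => ?_
    rw [hcompim t, ← hMc, hpow t]
    simp
  have habs : Tendsto (fun t : ℕ => ‖(μ ^ t) * v j‖) atTop (nhds 0) := by
    have hb : ∀ t : ℕ, ‖(μ ^ t) * v j‖ ≤ |((μ ^ t) * v j).re| + |((μ ^ t) * v j).im| :=
      fun t => Complex.norm_le_abs_re_add_abs_im _
    have h0 : Tendsto (fun t : ℕ => |((μ ^ t) * v j).re| + |((μ ^ t) * v j).im|)
        atTop (nhds 0) := by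
      simpa using (hre'.abs.add him'.abs)
    exact squeeze_zero (fun t => norm_nonneg _) hb h0
  have hlow : ∀ t : ℕ, ‖v j‖ ≤ ‖(μ ^ t) * v j‖ := by
    intro t
    rw [norm_mul, norm_pow]
    nlinarith [norm_nonneg (v j), one_le_pow₀ (n := t) hge]
  obtain ⟨t, ht⟩ := (habs.eventually_lt_const (show (0:ℝ) < ‖v j‖ by simpa using hj)).exists
  exact absurd (hlow t) (not_le.mpr ht)

lemma eq_of_mulVec_eq {a b : ℕ} {M N : Matrix (Fin a) (Fin b) ℝ}
    (h : ∀ v : Fin b → ℝ, M *ᵥ v = N *ᵥ v) : M = N := by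
  ext i j
  have := congrFun (h (Pi.single j 1)) i
  simpa [Matrix.mulVec_single] using this

lemma key
    (A : Matrix (Fin n) (Fin n) ℝ) (B : Matrix (Fin n) (Fin m) ℝ)
    (Cm : Matrix (Fin p) (Fin n) ℝ) (Dm : Matrix (Fin p) (Fin m) ℝ)
    (E : Matrix (Fin n) (Fin r) ℝ) (F : Matrix (Fin p) (Fin r) ℝ)
    (Auio : Matrix (Fin n) (Fin n) ℝ) (Bu : Matrix (Fin n) (Fin m) ℝ)
    (By : Matrix (Fin n) (Fin p) ℝ) (Du : Matrix (Fin n) (Fin m) ℝ)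
    (Dy : Matrix (Fin n) (Fin p) ℝ)
    (h1 : (1 - Dy * Cm) * E + (Auio * Dy - By) * F = 0)
    (h2 : Dy * F = 0)
    (h3 : Auio = (1 - Dy * Cm) * A + (Auio * Dy - By) * Cm)
    (h4 : Bu = (1 - Dy * Cm) * B - By * Dm)
    (h5 : Du = -(Dy * Dm))
    (x0 : Fin n → ℝ) (u0 u1 : Fin m → ℝ) (d0 d1 : Fin r → ℝ) :
    (A *ᵥ x0 + B *ᵥ u0 + E *ᵥ d0) - Du *ᵥ u1
      - Dy *ᵥ (Cm *ᵥ (A *ᵥ x0 + B *ᵥ u0 + E *ᵥ d0) + Dm *ᵥ u1 + F *ᵥ d1)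
      = Auio *ᵥ (x0 - Du *ᵥ u0 - Dy *ᵥ (Cm *ᵥ x0 + Dm *ᵥ u0 + F *ᵥ d0))
        + Bu *ᵥ u0 + By *ᵥ (Cm *ᵥ x0 + Dm *ᵥ u0 + F *ᵥ d0) := by
  subst h4 h5
  have f1 := fun (w : Fin r → ℝ) => congrArg (· *ᵥ w) h1
  have f2 := fun (w : Fin r → ℝ) => congrArg (· *ᵥ w) h2
  have f3 := fun (w : Fin n → ℝ) => congrArg (· *ᵥ w) h3
  simp only [Matrix.add_mulVec, Matrix.sub_mulVec, Matrix.neg_mulVec, Matrix.one_mulVec,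
    Matrix.zero_mulVec, ← Matrix.mulVec_mulVec] at f1 f2 f3
  funext i
  have g1 := congrFun (f1 d0) i
  have g2 := congrFun (f2 d0) i
  have g2' := congrFun (f2 d1) i
  have g3 := congrFun (f3 x0) i
  simp only [Matrix.mulVec_add, Matrix.mulVec_sub, Matrix.mulVec_neg, Matrix.add_mulVec,
    Matrix.sub_mulVec, Matrix.neg_mulVec, Matrix.one_mulVec, ← Matrix.mulVec_mulVec,
    Pi.add_apply, Pi.sub_apply, Pi.neg_apply, Pi.zero_apply] at g1 g2 g2' g3 ⊢
  linarith

/-- State sequence generated by recursion. -/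
def mkX (A : Matrix (Fin n) (Fin n) ℝ) (B : Matrix (Fin n) (Fin m) ℝ)
    (E : Matrix (Fin n) (Fin r) ℝ) (x0 : Fin n → ℝ) (u : ℕ → Fin m → ℝ)
    (d : ℕ → Fin r → ℝ) : ℕ → Fin n → ℝ
  | 0 => x0
  | (t + 1) => A *ᵥ (mkX A B E x0 u d t) + B *ᵥ u t + E *ᵥ d t

end UIOAux2

theorem theorem2_i_iff_v {n m p r : ℕ} (hn : 0 < n) (hm : 0 < m) (hp : 0 < p) (hr : 0 < r)
    (A : Matrix (Fin n) (Fin n) ℝ) (B : Matrix (Fin n) (Fin m) ℝ)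
    (Cm : Matrix (Fin p) (Fin n) ℝ) (Dm : Matrix (Fin p) (Fin m) ℝ)
    (E : Matrix (Fin n) (Fin r) ℝ) (F : Matrix (Fin p) (Fin r) ℝ)
    (hEF : (Matrix.fromRows E F).rank = r) :
    (∃ (Auio : Matrix (Fin n) (Fin n) ℝ) (Bu : Matrix (Fin n) (Fin m) ℝ)
      (By : Matrix (Fin n) (Fin p) ℝ) (Du : Matrix (Fin n) (Fin m) ℝ)
      (Dy : Matrix (Fin n) (Fin p) ℝ), IsUIO A B Cm Dm E F Auio Bu By Du Dy) ↔
      ∃ (Auio : Matrix (Fin n) (Fin n) ℝ) (Bu : Matrix (Fin n) (Fin m) ℝ)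
        (By : Matrix (Fin n) (Fin p) ℝ) (Du : Matrix (Fin n) (Fin m) ℝ)
        (Dy : Matrix (Fin n) (Fin p) ℝ),
        SchurStable Auio ∧ ((1 - Dy * Cm) * E + (Auio * Dy - By) * F = 0 ∧
      Dy * F = 0 ∧
      Auio = (1 - Dy * Cm) * A + (Auio * Dy - By) * Cm ∧
      Bu = (1 - Dy * Cm) * B - By * Dm ∧
      Du = -(Dy * Dm)) := by
  constructor
  · rintro ⟨Auio, Bu, By, Du, Dy, hacc, herr⟩
    have hP : ∀ (x0 : Fin n → ℝ) (u0 u1 : Fin m → ℝ) (d0 d1 : Fin r → ℝ),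
        (A *ᵥ x0 + B *ᵥ u0 + E *ᵥ d0) - Du *ᵥ u1
          - Dy *ᵥ (Cm *ᵥ (A *ᵥ x0 + B *ᵥ u0 + E *ᵥ d0) + Dm *ᵥ u1 + F *ᵥ d1)
          = Auio *ᵥ (x0 - Du *ᵥ u0 - Dy *ᵥ (Cm *ᵥ x0 + Dm *ᵥ u0 + F *ᵥ d0))
            + Bu *ᵥ u0 + By *ᵥ (Cm *ᵥ x0 + Dm *ᵥ u0 + F *ᵥ d0) := by
      intro x0 u0 u1 d0 d1
      set u : ℕ → Fin m → ℝ := fun t => if t = 0 then u0 else u1 with hu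
      set d : ℕ → Fin r → ℝ := fun t => if t = 0 then d0 else d1 with hd
      set x := UIOAux2.mkX A B E x0 u d with hx
      set y : ℕ → Fin p → ℝ := fun t => Cm *ᵥ x t + Dm *ᵥ u t + F *ᵥ d t with hy
      have hsol : SigmaSol A B Cm Dm E F x u y d := fun t => ⟨rfl, rfl⟩
      obtain ⟨z, hz⟩ := hacc x u y d hsol
      have hzt : ∀ t, z t = x t - Du *ᵥ u t - Dy *ᵥ y t := by
        intro t
        rw [(hz t).2]; abel
      have h01 := (hz 0).1
      rw [hzt 0, show (0:ℕ) + 1 = 1 from rfl, hzt 1] at h01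
      exact h01
    have hh5 : Du = -(Dy * Dm) := by
      apply UIOAux2.eq_of_mulVec_eq
      intro w
      have h := hP 0 0 w 0 0
      funext i
      have hi := congrFun h i
      simp only [Matrix.mulVec_zero, Matrix.mulVec_add, Matrix.mulVec_sub, Matrix.mulVec_neg,
        Matrix.add_mulVec, Matrix.sub_mulVec, Matrix.neg_mulVec, Matrix.zero_mulVec,
        Matrix.one_mulVec, ← Matrix.mulVec_mulVec, add_zero, zero_add, sub_zero, zero_sub,
        neg_zero, neg_neg, sub_self, Pi.add_apply, Pi.sub_apply, Pi.neg_apply,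
        Pi.zero_apply] at hi ⊢
      linarith
    have hh2 : Dy * F = 0 := by
      apply UIOAux2.eq_of_mulVec_eq
      intro w
      have h := hP 0 0 0 0 w
      funext i
      have hi := congrFun h i
      simp only [Matrix.mulVec_zero, Matrix.mulVec_add, Matrix.mulVec_sub, Matrix.mulVec_neg,
        Matrix.add_mulVec, Matrix.sub_mulVec, Matrix.neg_mulVec, Matrix.zero_mulVec,
        Matrix.one_mulVec, ← Matrix.mulVec_mulVec, add_zero, zero_add, sub_zero, zero_sub,
        neg_zero, neg_neg, sub_self, Pi.add_apply, Pi.sub_apply, Pi.neg_apply,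
        Pi.zero_apply] at hi ⊢
      linarith
    have hh1 : (1 - Dy * Cm) * E + (Auio * Dy - By) * F = 0 := by
      apply UIOAux2.eq_of_mulVec_eq
      intro w
      have h := hP 0 0 0 w 0
      funext i
      have hi := congrFun h i
      simp only [Matrix.mulVec_zero, Matrix.mulVec_add, Matrix.mulVec_sub, Matrix.mulVec_neg,
        Matrix.add_mulVec, Matrix.sub_mulVec, Matrix.neg_mulVec, Matrix.zero_mulVec,
        Matrix.one_mulVec, ← Matrix.mulVec_mulVec, add_zero, zero_add, sub_zero, zero_sub,
        neg_zero, neg_neg, sub_self, Pi.add_apply, Pi.sub_apply, Pi.neg_apply,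
        Pi.zero_apply] at hi ⊢
      linarith
    have hh3 : Auio = (1 - Dy * Cm) * A + (Auio * Dy - By) * Cm := by
      apply UIOAux2.eq_of_mulVec_eq
      intro w
      have h := hP w 0 0 0 0
      funext i
      have hi := congrFun h i
      simp only [Matrix.mulVec_zero, Matrix.mulVec_add, Matrix.mulVec_sub, Matrix.mulVec_neg,
        Matrix.add_mulVec, Matrix.sub_mulVec, Matrix.neg_mulVec, Matrix.zero_mulVec,
        Matrix.one_mulVec, ← Matrix.mulVec_mulVec, add_zero, zero_add, sub_zero, zero_sub,
        neg_zero, neg_neg, sub_self, Pi.add_apply, Pi.sub_apply, Pi.neg_apply,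
        Pi.zero_apply] at hi ⊢
      linarith
    have hh4 : Bu = (1 - Dy * Cm) * B - By * Dm := by
      apply UIOAux2.eq_of_mulVec_eq
      intro w
      have h := hP 0 w 0 0 0
      rw [hh5] at h
      funext i
      have hi := congrFun h i
      simp only [Matrix.mulVec_zero, Matrix.mulVec_add, Matrix.mulVec_sub, Matrix.mulVec_neg,
        Matrix.add_mulVec, Matrix.sub_mulVec, Matrix.neg_mulVec, Matrix.zero_mulVec,
        Matrix.one_mulVec, ← Matrix.mulVec_mulVec, add_zero, zero_add, sub_zero, zero_sub,
        neg_zero, neg_neg, sub_self, Pi.add_apply, Pi.sub_apply, Pi.neg_apply,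
        Pi.zero_apply] at hi ⊢
      linarith
    have hschur : SchurStable Auio := by
      refine UIOAux2.schur_of_mulVec_tendsto Auio ?_
      intro v
      have hsol0 : SigmaSol A B Cm Dm E F (fun _ => 0) (fun _ => 0) (fun _ => 0)
          (fun _ => 0) := by
        intro t
        constructor <;> simp [Matrix.mulVec_zero]
      have hobs : ObsSol Auio Bu By Du Dy (fun t => (Auio ^ t) *ᵥ v) (fun _ => 0)
          (fun _ => 0) (fun t => (Auio ^ t) *ᵥ v) := by
        intro t
        constructor
        · show (Auio ^ (t + 1)) *ᵥ v = _
          rw [pow_succ', ← Matrix.mulVec_mulVec]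
          simp [Matrix.mulVec_zero]
        · simp [Matrix.mulVec_zero]
      have hT := herr _ _ _ _ _ _ hsol0 hobs
      have hT' := hT.neg
      simpa using hT'
    exact ⟨Auio, Bu, By, Du, Dy, hschur, hh1, hh2, hh3, hh4, hh5⟩
  · rintro ⟨Auio, Bu, By, Du, Dy, hS, h1, h2, h3, h4, h5⟩
    refine ⟨Auio, Bu, By, Du, Dy, ?_, ?_⟩
    · intro x u y d hsol
      refine ⟨fun t => x t - Du *ᵥ u t - Dy *ᵥ y t, fun t => ⟨?_, ?_⟩⟩
      · show x (t + 1) - Du *ᵥ u (t + 1) - Dy *ᵥ y (t + 1)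
            = Auio *ᵥ (x t - Du *ᵥ u t - Dy *ᵥ y t) + Bu *ᵥ u t + By *ᵥ y t
        rw [(hsol (t + 1)).2, (hsol t).1, (hsol t).2]
        exact UIOAux2.key A B Cm Dm E F Auio Bu By Du Dy h1 h2 h3 h4 h5
          (x t) (u t) (u (t + 1)) (d t) (d (t + 1))
      · show x t = (x t - Du *ᵥ u t - Dy *ᵥ y t) + Du *ᵥ u t + Dy *ᵥ y t
        abel
    · intro x u y d xh z hsol hobs
      have hstep : ∀ t, x (t + 1) - xh (t + 1) = Auio *ᵥ (x t - xh t) := by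
        intro t
        have hzx : x (t + 1) - Du *ᵥ u (t + 1) - Dy *ᵥ y (t + 1)
            = Auio *ᵥ (x t - Du *ᵥ u t - Dy *ᵥ y t) + Bu *ᵥ u t + By *ᵥ y t := by
          rw [(hsol (t + 1)).2, (hsol t).1, (hsol t).2]
          exact UIOAux2.key A B Cm Dm E F Auio Bu By Du Dy h1 h2 h3 h4 h5
            (x t) (u t) (u (t + 1)) (d t) (d (t + 1))
        have e0 : x t - xh t = (x t - Du *ᵥ u t - Dy *ᵥ y t) - z t := by
          rw [(hobs t).2]; abel
        have e1 : Auio *ᵥ ((x t - Du *ᵥ u t - Dy *ᵥ y t) - z t)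
            = (x (t + 1) - Du *ᵥ u (t + 1) - Dy *ᵥ y (t + 1))
              - (Bu *ᵥ u t + By *ᵥ y t + Auio *ᵥ z t) := by
          rw [Matrix.mulVec_sub, hzx]; abel
        rw [e0, e1, (hobs (t + 1)).2, (hobs t).1]
        abel
      have hind : ∀ t, x t - xh t = (Auio ^ t) *ᵥ (x 0 - xh 0) := by
        intro t
        induction t with
        | zero => simp [Matrix.one_mulVec]
        | succ t ih => rw [hstep t, ih, Matrix.mulVec_mulVec, ← pow_succ']
      have hT := UIOAux2.schur_mulVec_tendsto Auio hS (x 0 - xh 0)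
      exact Tendsto.congr (fun t => (hind t).symm) hT
end
end

section
/- (Theorem 2, (iii)⇔(iv)) The following are equivalent: (iii) there exist matrices T₀, T₁ ∈ ℝ^{n×(n+p−r)} and a Schur stable matrix A_UIO ∈ ℝ^{n×n} such that the polynomial matrix identity (T₀ + z T₁) · [M_E M_F] · [zI_n − A; −C] = zI_n − A_UIO holds in ℝ[z]^{n×n}, where [zI_n − A; −C] ∈ ℝ[z]^{(n+p)×n} stacks zI_n − A over −C; (iv) there exist matrices S₀, S₁ ∈ ℝ^{n×(n+p)} and a Schur stable matrix A_UIO ∈ ℝ^{n×n} such that the polynomial matrix identity (S₀ + z S₁) · [[zI_n − A, −E], [−C, −F]] = [zI_n − A_UIO, 0] holds in ℝ[z]^{n×(n+r)}. -/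
open Matrix Filter

noncomputable section

private lemma pencil_eq_zero {α β : Type*} (U V : Matrix α β ℝ)
    (h : U.map (Polynomial.C : ℝ →+* Polynomial ℝ) +
      (Polynomial.X : Polynomial ℝ) • V.map (Polynomial.C : ℝ →+* Polynomial ℝ) = 0) :
    U = 0 ∧ V = 0 := by
  have h0 : ∀ i j, (Polynomial.C (U i j)) + Polynomial.X * Polynomial.C (V i j) = 0 := by
    intro i j
    have := congrFun (congrFun h i) j
    simpa [Matrix.map_apply, Matrix.smul_apply] using this
  constructor <;> ext i j
  · have := congrArg (fun q => Polynomial.coeff q 0) (h0 i j)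
    simpa using this
  · have := congrArg (fun q => Polynomial.coeff q 1) (h0 i j)
    simpa using this

private lemma exists_left_factor {β : Type*} [Fintype β] [DecidableEq β] {q r n : ℕ}
    (N : Matrix (Fin q) β ℝ) (G : Matrix β (Fin r) ℝ)
    (hNG : N * G = 0) (hrN : N.rank = q) (hrG : G.rank = r)
    (hcard : Fintype.card β = q + r)
    (S : Matrix (Fin n) β ℝ) (hS : S * G = 0) :
    ∃ T : Matrix (Fin n) (Fin q) ℝ, T * N = S := by
  have hker : LinearMap.range (Nᵀ.mulVecLin) = LinearMap.ker (Gᵀ.mulVecLin) := by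
    have hle : LinearMap.range (Nᵀ.mulVecLin) ≤ LinearMap.ker (Gᵀ.mulVecLin) := by
      rintro v ⟨t, rfl⟩
      simp only [LinearMap.mem_ker, Matrix.mulVecLin_apply, Matrix.mulVec_mulVec,
        ← Matrix.transpose_mul, hNG, Matrix.transpose_zero, Matrix.zero_mulVec]
    apply Submodule.eq_of_le_of_finrank_le hle
    have h1 : Module.finrank ℝ (LinearMap.range Nᵀ.mulVecLin) = q := by
      exact (Matrix.rank_transpose N).trans hrN
    have h2 : Module.finrank ℝ (LinearMap.range Gᵀ.mulVecLin) = r := by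
      exact (Matrix.rank_transpose G).trans hrG
    have h3 := LinearMap.finrank_range_add_finrank_ker (Gᵀ.mulVecLin)
    rw [h2, Module.finrank_fintype_fun_eq_card, hcard] at h3
    omega
  have hrow : ∀ i : Fin n, ∃ t : Fin q → ℝ, Nᵀ.mulVec t = S i := by
    intro i
    have hmem : S i ∈ LinearMap.ker (Gᵀ.mulVecLin) := by
      simp only [LinearMap.mem_ker, Matrix.mulVecLin_apply]
      ext j
      have := congrFun (congrFun hS i) j
      simpa [Matrix.mulVec, Matrix.mul_apply, dotProduct, Matrix.transpose_apply,
        mul_comm] using this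
    rw [← hker] at hmem
    obtain ⟨t, ht⟩ := hmem
    exact ⟨t, ht⟩
  choose t ht using hrow
  refine ⟨Matrix.of t, ?_⟩
  ext i j
  have := congrFun (ht i) j
  simpa [Matrix.mul_apply, Matrix.mulVec, dotProduct, Matrix.transpose_apply,
    mul_comm] using this

theorem theorem2_iii_iff_iv {n m p r : ℕ} (hn : 0 < n) (hm : 0 < m) (hp : 0 < p) (hr : 0 < r)
    (A : Matrix (Fin n) (Fin n) ℝ) (B : Matrix (Fin n) (Fin m) ℝ)
    (Cm : Matrix (Fin p) (Fin n) ℝ) (Dm : Matrix (Fin p) (Fin m) ℝ)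
    (E : Matrix (Fin n) (Fin r) ℝ) (F : Matrix (Fin p) (Fin r) ℝ)
    (hEF : (Matrix.fromRows E F).rank = r)
    (ME : Matrix (Fin (n + p - r)) (Fin n) ℝ) (MF : Matrix (Fin (n + p - r)) (Fin p) ℝ)
    (hMrank : (Matrix.fromCols ME MF).rank = n + p - r)
    (hMker : ∀ v : Fin n ⊕ Fin p → ℝ,
      (Matrix.fromCols ME MF).mulVec v = 0 ↔
        ∃ c : Fin r → ℝ, v = (Matrix.fromRows E F).mulVec c) :
    (∃ (T0 T1 : Matrix (Fin n) (Fin (n + p - r)) ℝ)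
      (Auio : Matrix (Fin n) (Fin n) ℝ), SchurStable Auio ∧
      (T0.map (Polynomial.C : ℝ →+* Polynomial ℝ) +
        (Polynomial.X : Polynomial ℝ) • T1.map (Polynomial.C : ℝ →+* Polynomial ℝ)) *
        (Matrix.fromCols ME MF).map (Polynomial.C : ℝ →+* Polynomial ℝ) *
        Matrix.fromRows
          ((Polynomial.X : Polynomial ℝ) • (1 : Matrix (Fin n) (Fin n) (Polynomial ℝ)) -
            A.map (Polynomial.C : ℝ →+* Polynomial ℝ))
          (-(Cm.map (Polynomial.C : ℝ →+* Polynomial ℝ))) =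
        (Polynomial.X : Polynomial ℝ) • (1 : Matrix (Fin n) (Fin n) (Polynomial ℝ)) -
          Auio.map (Polynomial.C : ℝ →+* Polynomial ℝ)) ↔
    (∃ (S0 S1 : Matrix (Fin n) (Fin n ⊕ Fin p) ℝ)
      (Auio : Matrix (Fin n) (Fin n) ℝ), SchurStable Auio ∧
      (S0.map (Polynomial.C : ℝ →+* Polynomial ℝ) +
        (Polynomial.X : Polynomial ℝ) • S1.map (Polynomial.C : ℝ →+* Polynomial ℝ)) *
        Matrix.fromBlocks
          ((Polynomial.X : Polynomial ℝ) • (1 : Matrix (Fin n) (Fin n) (Polynomial ℝ)) -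
            A.map (Polynomial.C : ℝ →+* Polynomial ℝ))
          (-(E.map (Polynomial.C : ℝ →+* Polynomial ℝ)))
          (-(Cm.map (Polynomial.C : ℝ →+* Polynomial ℝ)))
          (-(F.map (Polynomial.C : ℝ →+* Polynomial ℝ))) =
        Matrix.fromCols
          ((Polynomial.X : Polynomial ℝ) • (1 : Matrix (Fin n) (Fin n) (Polynomial ℝ)) -
            Auio.map (Polynomial.C : ℝ →+* Polynomial ℝ))
          (0 : Matrix (Fin n) (Fin r) (Polynomial ℝ))) :=  by
  classical
  set Cp := (Polynomial.C : ℝ →+* Polynomial ℝ) with hCp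
  set N := Matrix.fromCols ME MF with hN
  set G := Matrix.fromRows E F with hG
  have hNG : N * G = 0 := by
    ext i j
    have h := (hMker (G.mulVec (Pi.single j 1))).mpr ⟨Pi.single j 1, rfl⟩
    have h2 : (N * G).mulVec (Pi.single j 1) = 0 := by
      rw [← Matrix.mulVec_mulVec]; exact h
    have h3 := congrFun h2 i
    simpa [Matrix.mulVec_single] using h3
  have hmapNG : N.map Cp * G.map Cp = 0 := by
    rw [← Matrix.map_mul, hNG]
    ext i j; simp
  have hfromRowsEF : Matrix.fromRows (-(E.map Cp)) (-(F.map Cp)) = -(G.map Cp) := by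
    rw [hG]
    ext (i | i) j <;> simp [Matrix.fromRows_apply_inl, Matrix.fromRows_apply_inr, Matrix.map_apply]
  constructor
  · rintro ⟨T0, T1, Auio, hA, hid⟩
    refine ⟨T0 * N, T1 * N, Auio, hA, ?_⟩
    have hP : (T0 * N).map Cp + (Polynomial.X : Polynomial ℝ) • (T1 * N).map Cp =
        (T0.map Cp + (Polynomial.X : Polynomial ℝ) • T1.map Cp) * N.map Cp := by
      rw [Matrix.add_mul, Matrix.smul_mul, ← Matrix.map_mul, ← Matrix.map_mul]
    rw [hP, ← Matrix.fromCols_fromRows_eq_fromBlocks, Matrix.mul_fromCols,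
      hfromRowsEF]
    rw [Matrix.fromCols_ext_iff]
    constructor
    · exact hid
    · rw [Matrix.mul_assoc, Matrix.mul_neg, hmapNG]
      simp
  · rintro ⟨S0, S1, Auio, hA, hid⟩
    rw [← Matrix.fromCols_fromRows_eq_fromBlocks, Matrix.mul_fromCols,
      hfromRowsEF, Matrix.fromCols_ext_iff] at hid
    obtain ⟨h1, h2⟩ := hid
    have hSG : (S0 * G).map Cp +
        (Polynomial.X : Polynomial ℝ) • (S1 * G).map Cp = 0 := by
      have : (S0.map Cp + (Polynomial.X : Polynomial ℝ) • S1.map Cp) * G.map Cp = 0 := by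
        rw [← neg_eq_zero, ← Matrix.mul_neg, h2]
      rw [Matrix.map_mul, Matrix.map_mul, ← Matrix.smul_mul, ← Matrix.add_mul]
      exact this
    obtain ⟨hS0G, hS1G⟩ := pencil_eq_zero (S0 * G) (S1 * G) hSG
    have hrG : G.rank = r := hEF
    have hrle : r ≤ n + p := by
      have := Matrix.rank_le_card_height G
      simp only [Fintype.card_sum, Fintype.card_fin] at this
      omega
    have hcard : Fintype.card (Fin n ⊕ Fin p) = (n + p - r) + r := by
      simp [Fintype.card_sum]; omega
    obtain ⟨T0, hT0⟩ := exists_left_factor N G hNG hMrank hrG hcard S0 hS0G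
    obtain ⟨T1, hT1⟩ := exists_left_factor N G hNG hMrank hrG hcard S1 hS1G
    refine ⟨T0, T1, Auio, hA, ?_⟩
    have hP : (T0.map Cp + (Polynomial.X : Polynomial ℝ) • T1.map Cp) * N.map Cp =
        S0.map Cp + (Polynomial.X : Polynomial ℝ) • S1.map Cp := by
      rw [Matrix.add_mul, Matrix.smul_mul, ← Matrix.map_mul, ← Matrix.map_mul, hT0, hT1]
    rw [hP]
    exact h1
end
end

section
/- (Proposition 3) Suppose the historical data are generated by Σ and satisfy the Assumption. Then a triple of sequences (x, u, y) with values in ℝⁿ, ℝᵐ, ℝᵖ satisfies the compatibility condition — for every t ∈ ℕ the stacked vector (x(t), x(t+1), u(t), u(t+1), y(t), y(t+1)) ∈ ℝ^{2(n+m+p)} lies in the column space of Φ_d — if and only if there exists a sequence d with values in ℝʳ such that (x, u, y, d) is a solution of Σ. -/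
open Matrix Filter

noncomputable section

lemma mulVec_sum_smul {q k : ℕ} (M : Matrix (Fin q) (Fin k) ℝ) {s : Type*} [Fintype s]
    (c : s → ℝ) (v : s → Fin k → ℝ) :
    M.mulVec (∑ j, c j • v j) = ∑ j, c j • M.mulVec (v j) := by
  simp only [← Matrix.mulVecLin_apply, map_sum, _root_.map_smul]

theorem proposition3 {n m p r : ℕ} (hn : 0 < n) (hm : 0 < m) (hp : 0 < p) (hr : 0 < r)
    (A : Matrix (Fin n) (Fin n) ℝ) (B : Matrix (Fin n) (Fin m) ℝ)
    (Cm : Matrix (Fin p) (Fin n) ℝ) (Dm : Matrix (Fin p) (Fin m) ℝ)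
    (E : Matrix (Fin n) (Fin r) ℝ) (F : Matrix (Fin p) (Fin r) ℝ)
    (hEF : (Matrix.fromRows E F).rank = r)
    (T : ℕ) (hT : 2 ≤ T)
    (xd : ℕ → Fin n → ℝ) (ud : ℕ → Fin m → ℝ) (yd : ℕ → Fin p → ℝ)
    (dd : ℕ → Fin r → ℝ)
    (hgen1 : ∀ t : ℕ, t + 2 ≤ T →
      xd (t + 1) = A.mulVec (xd t) + B.mulVec (ud t) + E.mulVec (dd t))
    (hgen2 : ∀ t : ℕ, t + 1 ≤ T →
      yd t = Cm.mulVec (xd t) + Dm.mulVec (ud t) + F.mulVec (dd t))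
    (hassump : (HistMat T xd ud dd).rank = n + ((m + m) + (r + r)))
    (x : ℕ → Fin n → ℝ) (u : ℕ → Fin m → ℝ) (y : ℕ → Fin p → ℝ) :
    (∀ t : ℕ, ∃ c : Fin (T - 1) → ℝ,
      stackVec x u y t = (PhiD T xd ud yd).mulVec c) ↔
      ∃ d : ℕ → Fin r → ℝ, SigmaSol A B Cm Dm E F x u y d := by

  have key1 : ∀ c : Fin (T-1) → ℝ,
      (∑ j, c j • xd (j.1+1)) = A.mulVec (∑ j, c j • xd j.1)
        + B.mulVec (∑ j, c j • ud j.1) + E.mulVec (∑ j, c j • dd j.1) := by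
    intro c
    rw [mulVec_sum_smul, mulVec_sum_smul, mulVec_sum_smul,
      ← Finset.sum_add_distrib, ← Finset.sum_add_distrib]
    refine Finset.sum_congr rfl fun j _ => ?_
    rw [hgen1 j.1 (by have := j.2; omega), smul_add, smul_add]
  have key2 : ∀ c : Fin (T-1) → ℝ,
      (∑ j, c j • yd j.1) = Cm.mulVec (∑ j, c j • xd j.1)
        + Dm.mulVec (∑ j, c j • ud j.1) + F.mulVec (∑ j, c j • dd j.1) := by
    intro c
    rw [mulVec_sum_smul, mulVec_sum_smul, mulVec_sum_smul,
      ← Finset.sum_add_distrib, ← Finset.sum_add_distrib]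
    refine Finset.sum_congr rfl fun j _ => ?_
    rw [hgen2 j.1 (by have := j.2; omega), smul_add, smul_add]
  have key3 : ∀ c : Fin (T-1) → ℝ,
      (∑ j, c j • yd (j.1+1)) = Cm.mulVec (∑ j, c j • xd (j.1+1))
        + Dm.mulVec (∑ j, c j • ud (j.1+1)) + F.mulVec (∑ j, c j • dd (j.1+1)) := by
    intro c
    rw [mulVec_sum_smul, mulVec_sum_smul, mulVec_sum_smul,
      ← Finset.sum_add_distrib, ← Finset.sum_add_distrib]
    refine Finset.sum_congr rfl fun j _ => ?_
    rw [hgen2 (j.1+1) (by have := j.2; omega), smul_add, smul_add]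
  have hP1 : ∀ (c : Fin (T-1) → ℝ) (a : Fin n),
      (PhiD T xd ud yd).mulVec c (Sum.inl (Sum.inl a)) = (∑ j, c j • xd j.1) a := by
    intro c a
    simp [PhiD, Matrix.mulVec, dotProduct, Finset.sum_apply, mul_comm]
  have hP2 : ∀ (c : Fin (T-1) → ℝ) (a : Fin n),
      (PhiD T xd ud yd).mulVec c (Sum.inl (Sum.inr a)) = (∑ j, c j • xd (j.1+1)) a := by
    intro c a
    simp [PhiD, Matrix.mulVec, dotProduct, Finset.sum_apply, mul_comm]
  have hP3 : ∀ (c : Fin (T-1) → ℝ) (a : Fin m),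
      (PhiD T xd ud yd).mulVec c (Sum.inr (Sum.inl (Sum.inl a))) = (∑ j, c j • ud j.1) a := by
    intro c a
    simp [PhiD, Matrix.mulVec, dotProduct, Finset.sum_apply, mul_comm]
  have hP4 : ∀ (c : Fin (T-1) → ℝ) (a : Fin m),
      (PhiD T xd ud yd).mulVec c (Sum.inr (Sum.inl (Sum.inr a))) = (∑ j, c j • ud (j.1+1)) a := by
    intro c a
    simp [PhiD, Matrix.mulVec, dotProduct, Finset.sum_apply, mul_comm]
  have hP5 : ∀ (c : Fin (T-1) → ℝ) (a : Fin p),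
      (PhiD T xd ud yd).mulVec c (Sum.inr (Sum.inr (Sum.inl a))) = (∑ j, c j • yd j.1) a := by
    intro c a
    simp [PhiD, Matrix.mulVec, dotProduct, Finset.sum_apply, mul_comm]
  have hP6 : ∀ (c : Fin (T-1) → ℝ) (a : Fin p),
      (PhiD T xd ud yd).mulVec c (Sum.inr (Sum.inr (Sum.inr a))) = (∑ j, c j • yd (j.1+1)) a := by
    intro c a
    simp [PhiD, Matrix.mulVec, dotProduct, Finset.sum_apply, mul_comm]
  constructor
  · intro h
    refine ⟨fun t => ∑ j, (h t).choose j • dd j.1, fun t => ?_⟩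
    have hc := (h t).choose_spec
    set c := (h t).choose with hcdef
    have hx : x t = ∑ j, c j • xd j.1 := by
      funext a
      have := congrFun hc (Sum.inl (Sum.inl a))
      rw [hP1] at this
      simpa [stackVec] using this
    have hx' : x (t+1) = ∑ j, c j • xd (j.1+1) := by
      funext a
      have := congrFun hc (Sum.inl (Sum.inr a))
      rw [hP2] at this
      simpa [stackVec] using this
    have hu : u t = ∑ j, c j • ud j.1 := by
      funext a
      have := congrFun hc (Sum.inr (Sum.inl (Sum.inl a)))
      rw [hP3] at this
      simpa [stackVec] using this
    have hy : y t = ∑ j, c j • yd j.1 := by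
      funext a
      have := congrFun hc (Sum.inr (Sum.inr (Sum.inl a)))
      rw [hP5] at this
      simpa [stackVec] using this
    constructor
    · rw [hx', key1, hx, hu]
    · rw [hy, key2, hx, hu]
  · rintro ⟨d, hd⟩ t
    -- surjectivity of HistMat
    have hsurj : ∀ w : (Fin n ⊕ ((Fin m ⊕ Fin m) ⊕ (Fin r ⊕ Fin r))) → ℝ,
        ∃ c, (HistMat T xd ud dd).mulVec c = w := by
      have htop : LinearMap.range (HistMat T xd ud dd).mulVecLin = ⊤ := by
        apply Submodule.eq_top_of_finrank_eq
        rw [show Module.finrank ℝ (LinearMap.range (HistMat T xd ud dd).mulVecLin)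
            = (HistMat T xd ud dd).rank from rfl, hassump]
        simp [Module.finrank_fintype_fun_eq_card]
      intro w
      have : w ∈ LinearMap.range (HistMat T xd ud dd).mulVecLin := htop ▸ Submodule.mem_top
      obtain ⟨c, hc⟩ := this
      exact ⟨c, hc⟩
    obtain ⟨c, hc⟩ := hsurj fun i =>
      match i with
      | Sum.inl a => x t a
      | Sum.inr (Sum.inl (Sum.inl a)) => u t a
      | Sum.inr (Sum.inl (Sum.inr a)) => u (t+1) a
      | Sum.inr (Sum.inr (Sum.inl a)) => d t a
      | Sum.inr (Sum.inr (Sum.inr a)) => d (t+1) a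
    have hx : x t = ∑ j, c j • xd j.1 := by
      funext a
      have := congrFun hc (Sum.inl a)
      simp only [HistMat, Matrix.mulVec, dotProduct, Matrix.of_apply] at this
      simp [Finset.sum_apply, mul_comm, ← this]
    have hu : u t = ∑ j, c j • ud j.1 := by
      funext a
      have := congrFun hc (Sum.inr (Sum.inl (Sum.inl a)))
      simp only [HistMat, Matrix.mulVec, dotProduct, Matrix.of_apply] at this
      simp [Finset.sum_apply, mul_comm, ← this]
    have hu' : u (t+1) = ∑ j, c j • ud (j.1+1) := by
      funext a
      have := congrFun hc (Sum.inr (Sum.inl (Sum.inr a)))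
      simp only [HistMat, Matrix.mulVec, dotProduct, Matrix.of_apply] at this
      simp [Finset.sum_apply, mul_comm, ← this]
    have hdp : d t = ∑ j, c j • dd j.1 := by
      funext a
      have := congrFun hc (Sum.inr (Sum.inr (Sum.inl a)))
      simp only [HistMat, Matrix.mulVec, dotProduct, Matrix.of_apply] at this
      simp [Finset.sum_apply, mul_comm, ← this]
    have hdf : d (t+1) = ∑ j, c j • dd (j.1+1) := by
      funext a
      have := congrFun hc (Sum.inr (Sum.inr (Sum.inr a)))
      simp only [HistMat, Matrix.mulVec, dotProduct, Matrix.of_apply] at this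
      simp [Finset.sum_apply, mul_comm, ← this]
    have hx' : x (t+1) = ∑ j, c j • xd (j.1+1) := by
      rw [key1, ← hx, ← hu, ← hdp, (hd t).1]
    have hy : y t = ∑ j, c j • yd j.1 := by
      rw [key2, ← hx, ← hu, ← hdp, (hd t).2]
    have hy' : y (t+1) = ∑ j, c j • yd (j.1+1) := by
      rw [key3, ← hx', ← hu', ← hdf, (hd (t+1)).2]
    refine ⟨c, funext fun i => ?_⟩
    rcases i with (a | a) | ((a | a) | (a | a))
    · rw [hP1]; simpa [stackVec] using congrFun hx a
    · rw [hP2]; simpa [stackVec] using congrFun hx' a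
    · rw [hP3]; simpa [stackVec] using congrFun hu a
    · rw [hP4]; simpa [stackVec] using congrFun hu' a
    · rw [hP5]; simpa [stackVec] using congrFun hy a
    · rw [hP6]; simpa [stackVec] using congrFun hy' a
end
end
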